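/- arXiv:2503.19256 — 2 statements merged into one kernel-verified Lean document; each statement's English description precedes it below -/
import Mathlib

section
/- Lemma (relative Faber-Krahn functions of quasi-isometric graphs): Let (Γ, d, π, μ) and (Γ̂, d̂, π̂, μ̂) be connected, countably infinite weighted graphs with controlled and uniformly lazy weights, and suppose Φ : Γ → Γ̂ is a quasi-isometry with constants ε, a, b, C_q. Fix a choice of quasi-inverse Φ⁻¹ : Γ̂ → Γ, meaning that for each z ∈ Γ̂, Φ⁻¹(z) is a point β ∈ Γ with d̂(Φ(β), z) ≤ ε. Then there exist constants c₁, c₂, c₃ > 0, depending only on the quasi-isometry constants and the weight constants, such that whenever Λ(B, ν) is a relative Faber-Krahn function of Γ, the function Λ̂(B̂(z, r), ν) := c₁ Λ(B(Φ⁻¹(z), c₂ r), c₃ ν) is a relative Faber-Krahn function of Γ̂. -/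
open scoped BigOperators

/-- Sum of a real-valued function over a set of vertices. -/
noncomputable def setSum {V : Type*} (A : Set V) (f : V → ℝ) : ℝ := ∑' y : A, f (y : V)

open Classical in
/-- The Markov kernel attached to vertex weights `pw` and edge weights `ew`. -/
noncomputable def mkernel {V : Type*} (pw : V → ℝ) (ew : V → V → ℝ) (x y : V) : ℝ :=
  if x = y then 1 - (∑' z, ew x z) / pw x else ew x y / pw x

open Classical in
/-- Iterates (convolution powers) of the Markov kernel. -/
noncomputable def mkernelPow {V : Type*} (pw : V → ℝ) (ew : V → V → ℝ) : ℕ → V → V → ℝ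
  | 0 => fun x y => if x = y then 1 else 0
  | n + 1 => fun x y => ∑' z, mkernel pw ew x z * mkernelPow pw ew n z y

/-- The heat kernel (transition density) of the random walk. -/
noncomputable def mheat {V : Type*} (pw : V → ℝ) (ew : V → V → ℝ) (n : ℕ) (x y : V) : ℝ :=
  mkernelPow pw ew n x y / pw y

/-- A weighted graph: a simple connected graph with symmetric, adapted edge weights
subordinate to positive vertex weights. -/
structure WeightedGraph (V : Type*) where
  G : SimpleGraph V
  wV : V → ℝ
  wE : V → V → ℝ
  wV_pos : ∀ x, 0 < wV x
  wE_nonneg : ∀ x y, 0 ≤ wE x y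
  wE_symm : ∀ x y, wE x y = wE y x
  adapted : ∀ x y, 0 < wE x y ↔ G.Adj x y
  connected : G.Connected
  wE_summable : ∀ x, Summable fun y => wE x y
  subordinate : ∀ x, (∑' y, wE x y) ≤ wV x

namespace WeightedGraph

variable {V : Type*}

/-- Controlled weights with constant `Cc`. -/
def Controlled (Γ : WeightedGraph V) (Cc : ℝ) : Prop :=
  1 < Cc ∧ ∀ x y, Γ.G.Adj x y → Γ.wV x ≤ Cc * Γ.wE x y

/-- Uniformly lazy weights with constant `Ce`. -/
def UniformlyLazy (Γ : WeightedGraph V) (Ce : ℝ) : Prop :=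
  Ce ∈ Set.Ioo (0 : ℝ) 1 ∧ ∀ x, (∑' y, Γ.wE x y) ≤ (1 - Ce) * Γ.wV x

/-- Closed ball for the graph distance. -/
noncomputable def ball (Γ : WeightedGraph V) (x : V) (r : ℝ) : Set V :=
  {y | (Γ.G.dist x y : ℝ) ≤ r}

/-- Volume of a ball. -/
noncomputable def vol (Γ : WeightedGraph V) (x : V) (r : ℝ) : ℝ :=
  setSum (Γ.ball x r) Γ.wV

/-- Dirichlet energy of a function. -/
noncomputable def energy (Γ : WeightedGraph V) (f : V → ℝ) : ℝ :=
  (∑' x, ∑' y, (f x - f y) ^ 2 * Γ.wE x y) / 2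

/-- Squared `L²`-norm of a function. -/
noncomputable def sqnorm (Γ : WeightedGraph V) (f : V → ℝ) : ℝ :=
  ∑' x, f x ^ 2 * Γ.wV x

/-- The first Dirichlet eigenvalue of a finite set `Ω`. -/
noncomputable def lambda1 (Γ : WeightedGraph V) (Ω : Finset V) : ℝ :=
  sInf {q | ∃ f : V → ℝ, f ≠ 0 ∧ (∀ x, f x ≠ 0 → x ∈ Ω) ∧ q = Γ.energy f / Γ.sqnorm f}

/-- `Λ` is a relative Faber-Krahn function of `Γ`: for balls `B(z,r)` the map
`ν ↦ Λ z r ν` is non-increasing, and `λ₁(Ω) ≥ Λ(B, π(Ω))` for nonempty finite `Ω ⊆ B`. -/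
def IsRelFK (Γ : WeightedGraph V) (Λ : V → ℝ → ℝ → ℝ) : Prop :=
  (∀ z r ν₁ ν₂, 0 < ν₁ → ν₁ ≤ ν₂ → Λ z r ν₂ ≤ Λ z r ν₁) ∧
  ∀ z : V, ∀ r : ℝ, ∀ Ω : Finset V, Ω.Nonempty → (∀ x ∈ Ω, x ∈ Γ.ball z r) →
    Λ z r (∑ x ∈ Ω, Γ.wV x) ≤ Γ.lambda1 Ω

/-- The heat kernel of the weighted graph. -/
noncomputable def heatKernel (Γ : WeightedGraph V) : ℕ → V → V → ℝ :=
  mheat Γ.wV Γ.wE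

/-- `ε`-average of a function over closed balls of radius `ε`. -/
noncomputable def avg (Γ : WeightedGraph V) (ε : ℝ) (f : V → ℝ) (x : V) : ℝ :=
  setSum (Γ.ball x ε) (fun y => f y * Γ.wV y) / Γ.vol x ε

/-- `Φ` is a quasi-isometry between weighted graphs with constants `ε, a, b, Cq`. -/
structure IsQI {V₁ V₂ : Type*} (Γ₁ : WeightedGraph V₁) (Γ₂ : WeightedGraph V₂)
    (Φ : V₁ → V₂) (ε a b Cq : ℝ) : Prop where
  eps_pos : 0 < ε
  a_pos : 0 < a
  b_nonneg : 0 ≤ b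
  Cq_pos : 0 < Cq
  dense : ∀ z : V₂, ∃ x : V₁, (Γ₂.G.dist (Φ x) z : ℝ) ≤ ε
  dist_lower : ∀ x y : V₁, a⁻¹ * (Γ₁.G.dist x y : ℝ) - b ≤ (Γ₂.G.dist (Φ x) (Φ y) : ℝ)
  dist_upper : ∀ x y : V₁, (Γ₂.G.dist (Φ x) (Φ y) : ℝ) ≤ a * (Γ₁.G.dist x y : ℝ)
  weight_lower : ∀ x, Cq⁻¹ * Γ₁.wV x ≤ Γ₂.wV (Φ x)
  weight_upper : ∀ x, Γ₂.wV (Φ x) ≤ Cq * Γ₁.wV x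

end WeightedGraph

namespace WeightedGraph

variable {V : Type*} {Γ : WeightedGraph V} {Cc Ce : ℝ}

lemma wE_self (x : V) : Γ.wE x x = 0 := by
  have h := Γ.adapted x x
  have : ¬ Γ.G.Adj x x := Γ.G.irrefl
  have := (Γ.wE_nonneg x x).lt_or_eq
  rcases this with h' | h'
  · exact absurd (h.mp h') ‹¬ Γ.G.Adj x x›
  · exact h'.symm

lemma wE_le_tsum (x y : V) : Γ.wE x y ≤ ∑' z, Γ.wE x z :=
  Summable.le_tsum (Γ.wE_summable x) y (fun z _ => Γ.wE_nonneg x z)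

lemma wE_le_wV_left (x y : V) : Γ.wE x y ≤ Γ.wV x :=
  (wE_le_tsum x y).trans (Γ.subordinate x)

lemma wE_le_wV_right (x y : V) : Γ.wE x y ≤ Γ.wV y := by
  rw [Γ.wE_symm x y]; exact wE_le_wV_left y x

lemma wE_symm_summable (x : V) : Summable fun y => Γ.wE y x := by
  have : (fun y => Γ.wE y x) = fun y => Γ.wE x y := by
    funext y; exact Γ.wE_symm y x
  rw [this]; exact Γ.wE_summable x

lemma Controlled.one_le (hc : Γ.Controlled Cc) : (1:ℝ) ≤ Cc := le_of_lt hc.1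

lemma Controlled.wE_pos (hc : Γ.Controlled Cc) {x y : V} (h : Γ.G.Adj x y) :
    Γ.wV x / Cc ≤ Γ.wE x y := by
  rw [div_le_iff₀ (lt_trans one_pos hc.1)]
  linarith [hc.2 x y h]

lemma Controlled.adj_wV_le (hc : Γ.Controlled Cc) {x y : V} (h : Γ.G.Adj x y) :
    Γ.wV x ≤ Cc * Γ.wV y :=
  (hc.2 x y h).trans (by
    have := wE_le_wV_right (Γ := Γ) x y
    nlinarith [lt_trans one_pos hc.1])

lemma Controlled.walk_wV_le (hc : Γ.Controlled Cc) {x y : V} (p : Γ.G.Walk x y) :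
    Γ.wV x ≤ Cc ^ p.length * Γ.wV y := by
  induction p with
  | nil => simp
  | cons h q ih =>
    rename_i u v w
    have h1 : Γ.wV u ≤ Cc * Γ.wV v := hc.adj_wV_le h
    have h2 : (0:ℝ) < Cc := lt_trans one_pos hc.1
    have h3 : Cc * (Cc ^ q.length * Γ.wV w) = Cc ^ (SimpleGraph.Walk.cons h q).length * Γ.wV w := by
      simp [SimpleGraph.Walk.length_cons, pow_succ]; ring
    rw [← h3]
    nlinarith

lemma Controlled.dist_wV_le (hc : Γ.Controlled Cc) {x y : V} {k : ℕ}
    (h : Γ.G.dist x y ≤ k) : Γ.wV x ≤ Cc ^ k * Γ.wV y := by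
  obtain ⟨p, hp⟩ := (Γ.connected x y).exists_walk_length_eq_dist
  have h1 := hc.walk_wV_le p
  have h2 : Cc ^ p.length ≤ Cc ^ k := by
    apply pow_le_pow_right₀ hc.one_le
    omega
  calc Γ.wV x ≤ Cc ^ p.length * Γ.wV y := h1
  _ ≤ Cc ^ k * Γ.wV y := by nlinarith [Γ.wV_pos y]

/-- A set all of whose finite subsets have bounded cardinality is finite. -/
lemma _root_.Set.finite_of_card_finsets_bounded {α : Type*} (s : Set α) (n : ℕ)
    (h : ∀ F : Finset α, ↑F ⊆ s → F.card ≤ n) : s.Finite := by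
  by_contra hs
  obtain ⟨F, hF, hcard⟩ := Set.Infinite.exists_subset_card_eq (hs : s.Infinite) (n+1)
  exact absurd (h F hF) (by omega)

lemma Controlled.card_adj_le (hc : Γ.Controlled Cc) (x : V) (F : Finset V)
    (hF : ∀ y ∈ F, Γ.G.Adj x y) : F.card ≤ ⌈Cc⌉₊ := by
  have hpos := Γ.wV_pos x
  have hCc : (0:ℝ) < Cc := lt_trans one_pos hc.1
  have h1 : (F.card : ℝ) * (Γ.wV x / Cc) ≤ ∑ y ∈ F, Γ.wE x y := by
    have : (F.card : ℝ) * (Γ.wV x / Cc) = ∑ _y ∈ F, Γ.wV x / Cc := by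
      rw [Finset.sum_const, nsmul_eq_mul]
    rw [this]
    apply Finset.sum_le_sum
    intro y hy
    exact hc.wE_pos (hF y hy)
  have h2 : ∑ y ∈ F, Γ.wE x y ≤ ∑' y, Γ.wE x y :=
    Summable.sum_le_tsum F (fun y _ => Γ.wE_nonneg x y) (Γ.wE_summable x)
  have h3 : (F.card : ℝ) ≤ Cc := by
    have := (h1.trans h2).trans (Γ.subordinate x)
    have h4 : (F.card:ℝ) * Γ.wV x ≤ Cc * Γ.wV x := by
      have h5 : (F.card:ℝ) * Γ.wV x = (F.card * (Γ.wV x / Cc)) * Cc := by field_simp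
      rw [h5]
      nlinarith
    exact le_of_mul_le_mul_right h4 hpos
  calc F.card ≤ ⌈(F.card : ℝ)⌉₊ := by simp
  _ ≤ ⌈Cc⌉₊ := Nat.ceil_le_ceil h3

lemma Controlled.nbr_finite (hc : Γ.Controlled Cc) (x : V) :
    {y | Γ.G.Adj x y}.Finite := by
  apply Set.finite_of_card_finsets_bounded _ (⌈Cc⌉₊)
  intro F hF
  exact hc.card_adj_le x F (fun y hy => hF hy)

end WeightedGraph
namespace WeightedGraph

variable {V : Type*} [DecidableEq V] {Cc : ℝ}

/-- Neighborhood of a vertex as a finset. -/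
noncomputable def nbrF (Γ : WeightedGraph V) (hc : Γ.Controlled Cc) (x : V) : Finset V :=
  (hc.nbr_finite x).toFinset

lemma mem_nbrF {Γ : WeightedGraph V} (hc : Γ.Controlled Cc) {x y : V} :
    y ∈ Γ.nbrF hc x ↔ Γ.G.Adj x y := Set.Finite.mem_toFinset _

lemma card_nbrF_le {Γ : WeightedGraph V} (hc : Γ.Controlled Cc) (x : V) :
    (Γ.nbrF hc x).card ≤ ⌈Cc⌉₊ :=
  hc.card_adj_le x _ (fun y hy => (mem_nbrF hc).mp hy)

/-- Finite closed ball of radius `k`. -/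
noncomputable def ballF (Γ : WeightedGraph V) (hc : Γ.Controlled Cc) (x : V) : ℕ → Finset V
  | 0 => {x}
  | (k+1) => Γ.ballF hc x k ∪ (Γ.ballF hc x k).biUnion (Γ.nbrF hc)

variable {Γ : WeightedGraph V} (hc : Γ.Controlled Cc)

lemma self_mem_ballF (x : V) (k : ℕ) : x ∈ Γ.ballF hc x k := by
  induction k with
  | zero => simp [ballF]
  | succ k ih => simp only [ballF]; exact Finset.mem_union_left _ ih

lemma ballF_subset_succ (x : V) (k : ℕ) : Γ.ballF hc x k ⊆ Γ.ballF hc x (k+1) := by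
  intro y hy
  simp only [ballF]
  exact Finset.mem_union_left _ hy

lemma adj_ballF_subset {x v : V} (h : Γ.G.Adj x v) (k : ℕ) :
    Γ.ballF hc v k ⊆ Γ.ballF hc x (k+1) := by
  induction k generalizing x v with
  | zero =>
    intro y hy
    simp only [ballF, Finset.mem_singleton] at hy
    subst hy
    simp only [ballF]
    refine Finset.mem_union_right _ (Finset.mem_biUnion.mpr ⟨x, ?_, ?_⟩)
    · simp [ballF]
    · exact (mem_nbrF hc).mpr h
  | succ k ih =>
    intro y hy
    simp only [ballF] at hy ⊢
    rcases Finset.mem_union.mp hy with h1 | h1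
    · exact Finset.mem_union_left _ (ih h h1)
    · obtain ⟨u, hu, hyu⟩ := Finset.mem_biUnion.mp h1
      exact Finset.mem_union_right _ (Finset.mem_biUnion.mpr ⟨u, ih h hu, hyu⟩)

lemma mem_ballF_of_walk {x y : V} (k : ℕ) (p : Γ.G.Walk x y) (hp : p.length ≤ k) :
    y ∈ Γ.ballF hc x k := by
  induction k generalizing x y with
  | zero =>
    have : p.length = 0 := Nat.le_zero.mp hp
    have := p.eq_of_length_eq_zero this
    subst this
    simp [ballF]
  | succ k ih =>
    cases p with
    | nil => exact self_mem_ballF hc x (k+1)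
    | cons h q =>
      have hq : q.length ≤ k := by
        simpa [SimpleGraph.Walk.length_cons] using hp
      exact adj_ballF_subset hc h k (ih q hq)

lemma mem_ballF_of_dist {x y : V} {k : ℕ} (h : Γ.G.dist x y ≤ k) :
    y ∈ Γ.ballF hc x k := by
  obtain ⟨p, hp⟩ := (Γ.connected x y).exists_walk_length_eq_dist
  exact mem_ballF_of_walk hc k p (by omega)

lemma dist_le_of_mem_ballF {x y : V} {k : ℕ} (h : y ∈ Γ.ballF hc x k) :
    Γ.G.dist x y ≤ k := by
  induction k generalizing y with
  | zero =>
    simp only [ballF, Finset.mem_singleton] at h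
    subst h
    simp [SimpleGraph.dist_self]
  | succ k ih =>
    simp only [ballF] at h
    rcases Finset.mem_union.mp h with h1 | h1
    · exact (ih h1).trans (Nat.le_succ k)
    · obtain ⟨u, hu, hyu⟩ := Finset.mem_biUnion.mp h1
      have hadj : Γ.G.Adj u y := (mem_nbrF hc).mp hyu
      calc Γ.G.dist x y ≤ Γ.G.dist x u + Γ.G.dist u y := Γ.connected.dist_triangle
      _ ≤ k + 1 := by
          have h2 : Γ.G.dist u y ≤ 1 := by
            simpa using SimpleGraph.dist_le hadj.toWalk
          have h3 := ih hu
          omega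

lemma card_ballF_le (x : V) (k : ℕ) : (Γ.ballF hc x k).card ≤ (⌈Cc⌉₊ + 1) ^ k := by
  induction k with
  | zero => simp [ballF]
  | succ k ih =>
    classical
    simp only [ballF]
    calc (Γ.ballF hc x k ∪ (Γ.ballF hc x k).biUnion (Γ.nbrF hc)).card
        ≤ (Γ.ballF hc x k).card + ((Γ.ballF hc x k).biUnion (Γ.nbrF hc)).card :=
          Finset.card_union_le _ _
    _ ≤ (Γ.ballF hc x k).card + ∑ u ∈ Γ.ballF hc x k, (Γ.nbrF hc u).card := by
          have := Finset.card_biUnion_le (s := Γ.ballF hc x k) (t := Γ.nbrF hc)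
          omega
    _ ≤ (Γ.ballF hc x k).card + ∑ _u ∈ Γ.ballF hc x k, ⌈Cc⌉₊ := by
          have := Finset.sum_le_sum (s := Γ.ballF hc x k)
            (fun u _ => card_nbrF_le hc u)
          omega
    _ = (Γ.ballF hc x k).card * (⌈Cc⌉₊ + 1) := by
          rw [Finset.sum_const, smul_eq_mul]; ring
    _ ≤ (⌈Cc⌉₊ + 1) ^ k * (⌈Cc⌉₊ + 1) := by
          exact Nat.mul_le_mul_right _ ih
    _ = (⌈Cc⌉₊ + 1) ^ (k+1) := by rw [pow_succ]

end WeightedGraph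
namespace WeightedGraph

variable {V : Type*} {Γ : WeightedGraph V} {f : V → ℝ} {S : Finset V}

/-- Row sum of the energy. -/
noncomputable def eRow (Γ : WeightedGraph V) (f : V → ℝ) (x : V) : ℝ :=
  ∑' y, (f x - f y)^2 * Γ.wE x y

lemma term_nonneg (x y : V) : 0 ≤ (f x - f y)^2 * Γ.wE x y :=
  mul_nonneg (sq_nonneg _) (Γ.wE_nonneg x y)

lemma eRow_nonneg (x : V) : 0 ≤ Γ.eRow f x := tsum_nonneg (fun y => term_nonneg x y)

lemma two_energy_eq : 2 * Γ.energy f = ∑' x, Γ.eRow f x := by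
  unfold energy eRow; ring

lemma energy_nonneg : 0 ≤ Γ.energy f := by
  have h : (0:ℝ) ≤ ∑' x, Γ.eRow f x := tsum_nonneg fun x => eRow_nonneg x
  rw [← two_energy_eq] at h
  linarith

lemma summable_mul_wE (hs : ∀ x, f x ≠ 0 → x ∈ S) (x : V) :
    Summable (fun y => f y * Γ.wE x y) := by
  apply summable_of_ne_finset_zero (s := S)
  intro y hy
  have : f y = 0 := by by_contra h; exact hy (hs y h)
  simp [this]

lemma summable_sq_mul_wE (hs : ∀ x, f x ≠ 0 → x ∈ S) (x : V) :
    Summable (fun y => (f y)^2 * Γ.wE x y) := by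
  apply summable_of_ne_finset_zero (s := S)
  intro y hy
  have : f y = 0 := by by_contra h; exact hy (hs y h)
  simp [this]

lemma summable_term (hs : ∀ x, f x ≠ 0 → x ∈ S) (x : V) :
    Summable (fun y => (f x - f y)^2 * Γ.wE x y) := by
  have key : (fun y => (f x - f y)^2 * Γ.wE x y)
      = fun y => (((f x)^2 * Γ.wE x y - (2 * f x) * (f y * Γ.wE x y)) + (f y)^2 * Γ.wE x y) := by
    funext y; ring
  rw [key]
  exact (((Γ.wE_summable x).mul_left _).sub ((summable_mul_wE hs x).mul_left _)).add
    (summable_sq_mul_wE hs x)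

lemma eRow_le (hs : ∀ x, f x ≠ 0 → x ∈ S) (x : V) :
    Γ.eRow f x ≤ 2 * (f x)^2 * (∑' y, Γ.wE x y) + 2 * ∑ y ∈ S, (f y)^2 * Γ.wE x y := by
  have pt : ∀ y, (f x - f y)^2 * Γ.wE x y
      ≤ 2 * (f x)^2 * Γ.wE x y + 2 * ((f y)^2 * Γ.wE x y) := by
    intro y
    nlinarith [Γ.wE_nonneg x y, sq_nonneg (f x + f y)]
  have h1 : Summable (fun y => 2 * (f x)^2 * Γ.wE x y + 2 * ((f y)^2 * Γ.wE x y)) :=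
    ((Γ.wE_summable x).mul_left _).add ((summable_sq_mul_wE hs x).mul_left _)
  calc Γ.eRow f x ≤ ∑' y, (2 * (f x)^2 * Γ.wE x y + 2 * ((f y)^2 * Γ.wE x y)) :=
        Summable.tsum_le_tsum pt (summable_term hs x) h1
  _ = 2 * (f x)^2 * (∑' y, Γ.wE x y) + 2 * ∑' y, ((f y)^2 * Γ.wE x y) := by
        rw [Summable.tsum_add ((Γ.wE_summable x).mul_left _) ((summable_sq_mul_wE hs x).mul_left _),
          tsum_mul_left, tsum_mul_left]
  _ = 2 * (f x)^2 * (∑' y, Γ.wE x y) + 2 * ∑ y ∈ S, (f y)^2 * Γ.wE x y := by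
        congr 2
        apply tsum_eq_sum
        intro y hy
        have : f y = 0 := by by_contra h; exact hy (hs y h)
        simp [this]

lemma eRow_summable (hs : ∀ x, f x ≠ 0 → x ∈ S) : Summable (Γ.eRow f) := by
  apply Summable.of_nonneg_of_le (fun x => eRow_nonneg x) (eRow_le hs)
  apply Summable.add
  · apply summable_of_ne_finset_zero (s := S)
    intro x hx
    have : f x = 0 := by by_contra h; exact hx (hs x h)
    simp [this]
  · have : Summable (fun x => ∑ y ∈ S, (f y)^2 * Γ.wE x y) := by
      apply summable_sum
      intro y _
      exact (wE_symm_summable y).mul_left _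
    simpa [Finset.mul_sum] using this.mul_left 2

lemma sum_pairs_le_two_energy (hs : ∀ x, f x ≠ 0 → x ∈ S) (P : Finset (V × V)) :
    ∑ p ∈ P, (f p.1 - f p.2)^2 * Γ.wE p.1 p.2 ≤ 2 * Γ.energy f := by
  classical
  set A := P.image Prod.fst with hA
  set B := P.image Prod.snd with hB
  have hPsub : P ⊆ A ×ˢ B := by
    intro p hp
    rw [Finset.mem_product]
    exact ⟨Finset.mem_image_of_mem _ hp, Finset.mem_image_of_mem _ hp⟩
  calc ∑ p ∈ P, (f p.1 - f p.2)^2 * Γ.wE p.1 p.2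
      ≤ ∑ p ∈ A ×ˢ B, (f p.1 - f p.2)^2 * Γ.wE p.1 p.2 :=
        Finset.sum_le_sum_of_subset_of_nonneg hPsub (fun p _ _ => term_nonneg p.1 p.2)
  _ = ∑ x ∈ A, ∑ y ∈ B, (f x - f y)^2 * Γ.wE x y := by rw [Finset.sum_product]
  _ ≤ ∑ x ∈ A, Γ.eRow f x := by
        apply Finset.sum_le_sum
        intro x _
        exact Summable.sum_le_tsum B (fun y _ => term_nonneg x y) (summable_term hs x)
  _ ≤ ∑' x, Γ.eRow f x := Summable.sum_le_tsum A (fun x _ => eRow_nonneg x) (eRow_summable hs)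
  _ = 2 * Γ.energy f := (two_energy_eq).symm

lemma wE_eq_zero_of_not_adj {x y : V} (h : ¬ Γ.G.Adj x y) : Γ.wE x y = 0 := by
  rcases (Γ.wE_nonneg x y).lt_or_eq with h' | h'
  · exact absurd ((Γ.adapted x y).mp h') h
  · exact h'.symm

lemma sqnorm_nonneg : 0 ≤ Γ.sqnorm f :=
  tsum_nonneg (fun x => mul_nonneg (sq_nonneg _) (Γ.wV_pos x).le)

lemma sqnorm_eq_sum (hs : ∀ x, f x ≠ 0 → x ∈ S) :
    Γ.sqnorm f = ∑ x ∈ S, f x^2 * Γ.wV x := by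
  apply tsum_eq_sum
  intro x hx
  have : f x = 0 := by by_contra h; exact hx (hs x h)
  simp [this]

lemma sqnorm_summable (hs : ∀ x, f x ≠ 0 → x ∈ S) :
    Summable (fun x => f x^2 * Γ.wV x) := by
  apply summable_of_ne_finset_zero (s := S)
  intro x hx
  have : f x = 0 := by by_contra h; exact hx (hs x h)
  simp [this]

lemma sqnorm_pos (hf : f ≠ 0) (hs : ∀ x, f x ≠ 0 → x ∈ S) : 0 < Γ.sqnorm f := by
  obtain ⟨x₀, hx₀⟩ := Function.ne_iff.mp hf
  have hx₀S : x₀ ∈ S := hs x₀ hx₀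
  rw [sqnorm_eq_sum hs]
  apply Finset.sum_pos' (fun x _ => mul_nonneg (sq_nonneg _) (Γ.wV_pos x).le)
  have h2 : (0:ℝ) < f x₀ ^ 2 := (sq_nonneg _).lt_of_ne (Ne.symm (pow_ne_zero 2 hx₀))
  exact ⟨x₀, hx₀S, mul_pos h2 (Γ.wV_pos x₀)⟩

lemma two_energy_eq_sum [DecidableEq V] {Cc : ℝ} (hc : Γ.Controlled Cc)
    (hs : ∀ x, f x ≠ 0 → x ∈ S) :
    2 * Γ.energy f = ∑ x ∈ S ∪ S.biUnion (Γ.nbrF hc), ∑ y ∈ S ∪ S.biUnion (Γ.nbrF hc),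
      (f x - f y)^2 * Γ.wE x y := by
  set T := S ∪ S.biUnion (Γ.nbrF hc) with hT
  have hST : S ⊆ T := Finset.subset_union_left
  have hmemT : ∀ x y, Γ.G.Adj x y → y ∈ S → x ∈ T := by
    intro x y hadj hy
    exact Finset.mem_union_right _ (Finset.mem_biUnion.mpr ⟨y, hy, (mem_nbrF hc).mpr hadj.symm⟩)
  have hzero : ∀ x y, x ∉ T ∨ y ∉ T → (f x - f y)^2 * Γ.wE x y = 0 := by
    intro x y hxy
    by_cases hadj : Γ.G.Adj x y
    · have hfx : x ∉ T → f x = 0 := fun hx => by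
        by_contra h; exact hx (hST (hs x h))
      have hfy : y ∉ T → f y = 0 := fun hy => by
        by_contra h; exact hy (hST (hs y h))
      rcases hxy with hx | hy
      · have h1 : f x = 0 := hfx hx
        have h2 : f y = 0 := by
          by_contra h
          exact hx (hmemT x y hadj (hs y h))
        simp [h1, h2]
      · have h1 : f y = 0 := hfy hy
        have h2 : f x = 0 := by
          by_contra h
          exact hy (hmemT y x hadj.symm (hs x h))
        simp [h1, h2]
    · simp [wE_eq_zero_of_not_adj hadj]
  rw [two_energy_eq]
  rw [tsum_eq_sum (s := T) (fun x hx => by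
    unfold eRow
    have : ∀ y, (f x - f y)^2 * Γ.wE x y = 0 := fun y => hzero x y (Or.inl hx)
    simp [this])]
  apply Finset.sum_congr rfl
  intro x _
  unfold eRow
  exact tsum_eq_sum (fun y hy => hzero x y (Or.inr hy))

end WeightedGraph
namespace WeightedGraph

lemma list_sq_sum_le (l : List ℝ) :
    l.sum ^ 2 ≤ (l.length : ℝ) * (l.map (fun x => x^2)).sum := by
  induction l with
  | nil => simp
  | cons a l ih =>
    by_cases hnil : l = []
    · subst hnil; simp
    · have hL1 : (1:ℝ) ≤ (l.length : ℝ) := by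
        have := List.length_pos_iff.mpr hnil
        exact_mod_cast this
      have hQ : (0:ℝ) ≤ (l.map (fun x => x^2)).sum := by
        apply List.sum_nonneg
        intro x hx
        obtain ⟨y, _, rfl⟩ := List.mem_map.mp hx
        exact sq_nonneg y
      simp only [List.sum_cons, List.map_cons, List.length_cons, Nat.cast_add, Nat.cast_one]
      nlinarith [sq_nonneg ((l.length:ℝ) * a - l.sum),
        mul_nonneg (sub_nonneg.mpr hL1) (sub_nonneg.mpr ih), ih, hQ, hL1]

lemma walk_telescope {V : Type*} {G : SimpleGraph V} {u v : V} (f : V → ℝ) (p : G.Walk u v) :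
    f u - f v = (p.darts.map (fun d => f d.toProd.1 - f d.toProd.2)).sum := by
  induction p with
  | nil => simp
  | cons h q ih =>
    simp only [SimpleGraph.Walk.darts_cons, List.map_cons, List.sum_cons]
    linarith [ih]

lemma dist_le_length_of_mem_support {V : Type*} {G : SimpleGraph V} [DecidableEq V] {u v w : V}
    (p : G.Walk u v) (h : w ∈ p.support) : G.dist u w ≤ p.length :=
  (SimpleGraph.dist_le (p.takeUntil w h)).trans (SimpleGraph.Walk.length_takeUntil_le p h)

variable {V : Type*} [DecidableEq V] {Γ : WeightedGraph V} {Cc Ce : ℝ}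

lemma chain_bound (hc : Γ.Controlled Cc) {u v : V} {k : ℕ} (hk : Γ.G.dist u v ≤ k) (f : V → ℝ) :
    (f u - f v)^2 * Γ.wV u ≤ (k : ℝ) * Cc^(k+1) *
      ∑ p ∈ (Γ.ballF hc u k) ×ˢ (Γ.ballF hc u k), (f p.1 - f p.2)^2 * Γ.wE p.1 p.2 := by
  classical
  have hCc : (0:ℝ) < Cc := lt_trans one_pos hc.1
  have hsum_nonneg : (0:ℝ) ≤ ∑ p ∈ (Γ.ballF hc u k) ×ˢ (Γ.ballF hc u k),
      (f p.1 - f p.2)^2 * Γ.wE p.1 p.2 :=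
    Finset.sum_nonneg (fun p _ => term_nonneg p.1 p.2)
  rcases eq_or_ne u v with rfl | huv
  · simp only [sub_self]
    have : (0:ℝ)^2 * Γ.wV u = 0 := by ring
    rw [this]
    positivity
  obtain ⟨p, hp⟩ := (Γ.connected u v).exists_walk_length_eq_dist
  have hpath : p.IsPath := SimpleGraph.Walk.isPath_of_length_eq_dist p hp
  have hnodup : p.darts.Nodup := SimpleGraph.Walk.darts_nodup_of_support_nodup hpath.support_nodup
  have hlen : p.length ≤ k := by omega
  -- step 1 : Cauchy-Schwarz along the walk
  have step1 : (f u - f v)^2 ≤ (p.length : ℝ) *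
      (p.darts.map (fun d => (f d.toProd.1 - f d.toProd.2)^2)).sum := by
    have := list_sq_sum_le (p.darts.map (fun d => f d.toProd.1 - f d.toProd.2))
    rw [← walk_telescope f p] at this
    simpa [List.map_map, Function.comp_def] using this
  -- convert dart list sums to finset sums
  set D : Finset (Γ.G.Dart) := p.darts.toFinset with hD
  have hsum_eq : ∀ (g : Γ.G.Dart → ℝ), (p.darts.map g).sum = ∑ d ∈ D, g d := by
    intro g
    rw [hD, List.sum_toFinset g hnodup]
  -- per-dart weight estimate
  have hdart : ∀ d ∈ D, Γ.wV u ≤ Cc^(k+1) * Γ.wE d.toProd.1 d.toProd.2 := by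
    intro d hd
    have hdd : d ∈ p.darts := List.mem_toFinset.mp hd
    have h1 : Γ.G.dist u d.toProd.1 ≤ k :=
      (dist_le_length_of_mem_support p (p.dart_fst_mem_support_of_mem_darts hdd)).trans hlen
    have h2 : Γ.wV u ≤ Cc^k * Γ.wV d.toProd.1 := hc.dist_wV_le h1
    have h3 : Γ.wV d.toProd.1 ≤ Cc * Γ.wE d.toProd.1 d.toProd.2 := hc.2 _ _ d.adj
    calc Γ.wV u ≤ Cc^k * Γ.wV d.toProd.1 := h2
    _ ≤ Cc^k * (Cc * Γ.wE d.toProd.1 d.toProd.2) := by nlinarith [pow_pos hCc k]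
    _ = Cc^(k+1) * Γ.wE d.toProd.1 d.toProd.2 := by rw [pow_succ]; ring
  -- darts inject into the ball pairs
  have himg : ∀ d ∈ D, d.toProd ∈ (Γ.ballF hc u k) ×ˢ (Γ.ballF hc u k) := by
    intro d hd
    have hdd : d ∈ p.darts := List.mem_toFinset.mp hd
    have h1 : Γ.G.dist u d.toProd.1 ≤ k :=
      (dist_le_length_of_mem_support p (p.dart_fst_mem_support_of_mem_darts hdd)).trans hlen
    have h2 : Γ.G.dist u d.toProd.2 ≤ k :=
      (dist_le_length_of_mem_support p (p.dart_snd_mem_support_of_mem_darts hdd)).trans hlen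
    rw [Finset.mem_product]
    exact ⟨mem_ballF_of_dist hc h1, mem_ballF_of_dist hc h2⟩
  have step2 : ∑ d ∈ D, (f d.toProd.1 - f d.toProd.2)^2 * Γ.wE d.toProd.1 d.toProd.2
      ≤ ∑ p ∈ (Γ.ballF hc u k) ×ˢ (Γ.ballF hc u k), (f p.1 - f p.2)^2 * Γ.wE p.1 p.2 := by
    have hinj2 : ∀ x ∈ D, ∀ y ∈ D, x.toProd = y.toProd → x = y :=
      fun x _ y _ h => SimpleGraph.Dart.toProd_injective h
    have heq := Finset.sum_image (s := D) (g := SimpleGraph.Dart.toProd)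
      (f := fun q : V × V => (f q.1 - f q.2)^2 * Γ.wE q.1 q.2) hinj2
    calc ∑ d ∈ D, (f d.toProd.1 - f d.toProd.2)^2 * Γ.wE d.toProd.1 d.toProd.2
        = ∑ q ∈ D.image SimpleGraph.Dart.toProd, (f q.1 - f q.2)^2 * Γ.wE q.1 q.2 := heq.symm
    _ ≤ ∑ p ∈ (Γ.ballF hc u k) ×ˢ (Γ.ballF hc u k), (f p.1 - f p.2)^2 * Γ.wE p.1 p.2 := by
        apply Finset.sum_le_sum_of_subset_of_nonneg
        · intro q hq
          obtain ⟨d, hd, rfl⟩ := Finset.mem_image.mp hq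
          exact himg d hd
        · intro q _ _
          exact term_nonneg q.1 q.2
  -- assemble
  have hwV : (0:ℝ) < Γ.wV u := Γ.wV_pos u
  have step3 : (f u - f v)^2 * Γ.wV u ≤ (p.length : ℝ) *
      ∑ d ∈ D, (f d.toProd.1 - f d.toProd.2)^2 * Γ.wV u := by
    rw [← Finset.sum_mul, ← hsum_eq]
    nlinarith [hsum_eq (fun d => (f d.toProd.1 - f d.toProd.2)^2), sq_nonneg (f u - f v),
      List.sum_nonneg (l := p.darts.map (fun d => (f d.toProd.1 - f d.toProd.2)^2))
        (fun x hx => by obtain ⟨d, _, rfl⟩ := List.mem_map.mp hx; exact sq_nonneg _)]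
  have step4 : ∑ d ∈ D, (f d.toProd.1 - f d.toProd.2)^2 * Γ.wV u
      ≤ Cc^(k+1) * ∑ d ∈ D, (f d.toProd.1 - f d.toProd.2)^2 * Γ.wE d.toProd.1 d.toProd.2 := by
    rw [Finset.mul_sum]
    apply Finset.sum_le_sum
    intro d hd
    have := hdart d hd
    nlinarith [sq_nonneg (f d.toProd.1 - f d.toProd.2)]
  have hlenk : (p.length : ℝ) ≤ (k : ℝ) := by exact_mod_cast hlen
  have hlen_nonneg : (0:ℝ) ≤ (p.length : ℝ) := by positivity
  have hDsum_nonneg : (0:ℝ) ≤ ∑ d ∈ D, (f d.toProd.1 - f d.toProd.2)^2 *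
      Γ.wE d.toProd.1 d.toProd.2 := Finset.sum_nonneg (fun d _ => term_nonneg _ _)
  calc (f u - f v)^2 * Γ.wV u
      ≤ (p.length : ℝ) * ∑ d ∈ D, (f d.toProd.1 - f d.toProd.2)^2 * Γ.wV u := step3
  _ ≤ (p.length : ℝ) * (Cc^(k+1) * ∑ d ∈ D, (f d.toProd.1 - f d.toProd.2)^2 *
        Γ.wE d.toProd.1 d.toProd.2) := by
      apply mul_le_mul_of_nonneg_left step4 hlen_nonneg
  _ ≤ (k : ℝ) * (Cc^(k+1) * ∑ d ∈ D, (f d.toProd.1 - f d.toProd.2)^2 *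
        Γ.wE d.toProd.1 d.toProd.2) := by
      apply mul_le_mul_of_nonneg_right hlenk
      positivity
  _ ≤ (k : ℝ) * Cc^(k+1) * ∑ p ∈ (Γ.ballF hc u k) ×ˢ (Γ.ballF hc u k),
        (f p.1 - f p.2)^2 * Γ.wE p.1 p.2 := by
      rw [mul_assoc]
      apply mul_le_mul_of_nonneg_left _ (by positivity)
      apply mul_le_mul_of_nonneg_left step2 (by positivity)

end WeightedGraph
namespace WeightedGraph

/-- Exchange of summation with multiplicity bound. -/
lemma sum_sum_le_mult {ι P' : Type*} [DecidableEq P'] (S : Finset ι) (F : ι → Finset P')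
    (t : P' → ℝ) (ht : ∀ p, 0 ≤ t p) (N : ℝ)
    (hN : ∀ p ∈ S.biUnion F, ((S.filter (fun i => p ∈ F i)).card : ℝ) ≤ N) :
    ∑ i ∈ S, ∑ p ∈ F i, t p ≤ N * ∑ p ∈ S.biUnion F, t p := by
  classical
  set U := S.biUnion F with hU
  have h1 : ∀ i ∈ S, ∑ p ∈ F i, t p = ∑ p ∈ U, if p ∈ F i then t p else 0 := by
    intro i hi
    rw [Finset.sum_ite_mem]
    congr 1
    rw [Finset.inter_eq_right.mpr]
    intro p hp
    exact Finset.mem_biUnion.mpr ⟨i, hi, hp⟩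
  rw [Finset.sum_congr rfl h1, Finset.sum_comm]
  have h2 : ∀ p ∈ U, ∑ i ∈ S, (if p ∈ F i then t p else 0)
      = ((S.filter (fun i => p ∈ F i)).card : ℝ) * t p := by
    intro p _
    rw [Finset.sum_ite, Finset.sum_const, Finset.sum_const_zero, add_zero, nsmul_eq_mul]
  rw [Finset.sum_congr rfl h2, Finset.mul_sum]
  apply Finset.sum_le_sum
  intro p hp
  exact mul_le_mul_of_nonneg_right (hN p hp) (ht p)

variable {V : Type*} {Γ : WeightedGraph V} {Cc Ce : ℝ}

lemma lambda1_bddBelow (Ω : Finset V) :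
    BddBelow {q | ∃ f : V → ℝ, f ≠ 0 ∧ (∀ x, f x ≠ 0 → x ∈ Ω) ∧ q = Γ.energy f / Γ.sqnorm f} := by
  refine ⟨0, ?_⟩
  rintro q ⟨f, _, _, rfl⟩
  exact div_nonneg energy_nonneg sqnorm_nonneg

lemma lambda1_le_of (Ω : Finset V) (g : V → ℝ) (hg : g ≠ 0) (hsupp : ∀ x, g x ≠ 0 → x ∈ Ω) :
    Γ.lambda1 Ω ≤ Γ.energy g / Γ.sqnorm g :=
  csInf_le (lambda1_bddBelow Ω) ⟨g, hg, hsupp, rfl⟩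

/-- The indicator function of a vertex. -/
noncomputable def indic (u : V) : V → ℝ := by
  classical
  exact fun x => if x = u then 1 else 0

lemma indic_ne_zero (u : V) : (indic u : V → ℝ) ≠ 0 := by
  intro h
  have := congrFun h u
  simp [indic] at this

lemma indic_supp (u : V) : ∀ x, indic u x ≠ 0 → x ∈ ({u} : Finset V) := by
  classical
  intro x hx
  simp only [indic] at hx
  by_cases h : x = u
  · simp [h]
  · simp [h] at hx

lemma le_lambda1_of (Ω : Finset V) (hne : Ω.Nonempty) (c : ℝ)
    (h : ∀ f : V → ℝ, f ≠ 0 → (∀ x, f x ≠ 0 → x ∈ Ω) → c ≤ Γ.energy f / Γ.sqnorm f) :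
    c ≤ Γ.lambda1 Ω := by
  classical
  obtain ⟨x₀, hx₀⟩ := hne
  apply le_csInf
  · refine ⟨Γ.energy (indic x₀) / Γ.sqnorm (indic x₀), indic x₀, indic_ne_zero x₀, ?_, rfl⟩
    intro x hx
    have := indic_supp x₀ x hx
    simp only [Finset.mem_singleton] at this
    subst this
    exact hx₀
  · rintro q ⟨f, hf, hfs, rfl⟩
    exact h f hf hfs

lemma sqnorm_indic (u : V) : Γ.sqnorm (indic u) = Γ.wV u := by
  classical
  rw [sqnorm_eq_sum (S := {u}) (indic_supp u)]
  simp [indic]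

lemma lambda1_singleton_le [DecidableEq V] (hc : Γ.Controlled Cc) (hl : Γ.UniformlyLazy Ce)
    (u : V) : Γ.lambda1 {u} ≤ 1 - Ce := by
  classical
  have hwV := Γ.wV_pos u
  have hE : Γ.energy (indic u) ≤ (1 - Ce) * Γ.wV u := by
    have h2 := two_energy_eq_sum (S := {u}) hc (indic_supp u)
    set T := ({u} : Finset V) ∪ ({u} : Finset V).biUnion (Γ.nbrF hc) with hT
    have huT : u ∈ T := Finset.mem_union_left _ (Finset.mem_singleton_self u)
    have hterm : ∀ x y : V, (indic u x - indic u y)^2 * Γ.wE x y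
        ≤ (indic u x)^2 * Γ.wE x y + (indic u y)^2 * Γ.wE x y := by
      intro x y
      have h0 : (0:ℝ) ≤ indic u x := by simp only [indic]; positivity
      have h1 : (0:ℝ) ≤ indic u y := by simp only [indic]; positivity
      nlinarith [Γ.wE_nonneg x y, mul_nonneg h0 h1]
    have hsum1 : ∑ x ∈ T, ∑ y ∈ T, (indic u x)^2 * Γ.wE x y ≤ (1 - Ce) * Γ.wV u := by
      have hx : ∀ x ∈ T, ∑ y ∈ T, (indic u x)^2 * Γ.wE x y
          = if x = u then ∑ y ∈ T, Γ.wE u y else 0 := by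
        intro x _
        by_cases h : x = u
        · subst h; simp [indic]
        · simp [indic, h]
      rw [Finset.sum_congr rfl hx, Finset.sum_ite_eq' T u (fun _ => ∑ y ∈ T, Γ.wE u y)]
      simp only [huT, if_true]
      calc ∑ y ∈ T, Γ.wE u y ≤ ∑' y, Γ.wE u y :=
            Summable.sum_le_tsum T (fun y _ => Γ.wE_nonneg u y) (Γ.wE_summable u)
      _ ≤ (1 - Ce) * Γ.wV u := hl.2 u
    have hsum2 : ∑ x ∈ T, ∑ y ∈ T, (indic u y)^2 * Γ.wE x y ≤ (1 - Ce) * Γ.wV u := by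
      rw [Finset.sum_comm]
      have hy : ∀ y ∈ T, ∑ x ∈ T, (indic u y)^2 * Γ.wE x y
          = if y = u then ∑ x ∈ T, Γ.wE u x else 0 := by
        intro y _
        by_cases h : y = u
        · simp only [indic, h, if_pos rfl]
          apply Finset.sum_congr rfl
          intro x _
          rw [Γ.wE_symm x u]
          simp
        · simp [indic, h]
      rw [Finset.sum_congr rfl hy, Finset.sum_ite_eq' T u (fun _ => ∑ x ∈ T, Γ.wE u x)]
      simp only [huT, if_true]
      calc ∑ x ∈ T, Γ.wE u x ≤ ∑' x, Γ.wE u x :=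
            Summable.sum_le_tsum T (fun x _ => Γ.wE_nonneg u x) (Γ.wE_summable u)
      _ ≤ (1 - Ce) * Γ.wV u := hl.2 u
    have h3 : ∑ x ∈ T, ∑ y ∈ T, (indic u x - indic u y)^2 * Γ.wE x y
        ≤ 2 * ((1 - Ce) * Γ.wV u) := by
      calc ∑ x ∈ T, ∑ y ∈ T, (indic u x - indic u y)^2 * Γ.wE x y
          ≤ ∑ x ∈ T, ∑ y ∈ T, ((indic u x)^2 * Γ.wE x y + (indic u y)^2 * Γ.wE x y) := by
            apply Finset.sum_le_sum
            intro x _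
            apply Finset.sum_le_sum
            intro y _
            exact hterm x y
      _ = (∑ x ∈ T, ∑ y ∈ T, (indic u x)^2 * Γ.wE x y)
            + ∑ x ∈ T, ∑ y ∈ T, (indic u y)^2 * Γ.wE x y := by
            rw [← Finset.sum_add_distrib]
            apply Finset.sum_congr rfl
            intro x _
            rw [← Finset.sum_add_distrib]
      _ ≤ 2 * ((1 - Ce) * Γ.wV u) := by linarith
    linarith [h2 ▸ h3]
  have hq : Γ.energy (indic u) / Γ.sqnorm (indic u) ≤ 1 - Ce := by
    rw [sqnorm_indic, div_le_iff₀ hwV]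
    linarith
  exact (lambda1_le_of {u} (indic u) (indic_ne_zero u) (indic_supp u)).trans hq

lemma exists_adj [Infinite V] (Γ : WeightedGraph V) (z : V) : ∃ y, Γ.G.Adj z y := by
  obtain ⟨w, hw⟩ := exists_ne z
  obtain ⟨p⟩ := Γ.connected z w
  cases p with
  | nil => exact absurd rfl hw
  | cons h q => exact ⟨_, h⟩

end WeightedGraph
namespace WeightedGraph

/-- Lower bound for the Rayleigh quotient of a function supported in a single vertex. -/
lemma rayleigh_singleton_lower {V : Type*} [Infinite V] {Γ : WeightedGraph V} {Cc : ℝ}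
    (hc : Γ.Controlled Cc) {f : V → ℝ} {z : V}
    (hsupp : ∀ x, f x ≠ 0 → x ∈ ({z} : Finset V)) (hfz : f z ≠ 0) :
    1/Cc ≤ Γ.energy f / Γ.sqnorm f := by
  classical
  have hCc : (0:ℝ) < Cc := lt_trans one_pos hc.1
  obtain ⟨y₀, hy₀⟩ := exists_adj Γ z
  have hzy : z ≠ y₀ := hy₀.ne
  have hfy₀ : f y₀ = 0 := by
    by_contra h
    exact hzy ((Finset.mem_singleton.mp (hsupp y₀ h)).symm)
  have hμ : Γ.wV z / Cc ≤ Γ.wE z y₀ := hc.wE_pos hy₀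
  have hP : f z^2 * Γ.wE z y₀ ≤ Γ.energy f := by
    have h := sum_pairs_le_two_energy (Γ := Γ) (S := {z}) hsupp
      ({(z,y₀), (y₀,z)} : Finset (V × V))
    have hne2 : ((z,y₀) : V × V) ≠ (y₀,z) := fun h' => hzy (congrArg Prod.fst h')
    rw [Finset.sum_insert (by simp [hne2]), Finset.sum_singleton] at h
    have hsym : Γ.wE y₀ z = Γ.wE z y₀ := Γ.wE_symm y₀ z
    rw [hfy₀, hsym] at h
    simp only at h
    nlinarith
  have hsq : Γ.sqnorm f = f z^2 * Γ.wV z := by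
    rw [sqnorm_eq_sum (S := {z}) hsupp, Finset.sum_singleton]
  rw [hsq]
  have hfz2 : (0:ℝ) < f z^2 := (sq_nonneg _).lt_of_ne (Ne.symm (pow_ne_zero 2 hfz))
  have hden : (0:ℝ) < f z^2 * Γ.wV z := mul_pos hfz2 (Γ.wV_pos z)
  rw [div_le_div_iff₀ hCc hden]
  have h1 : Γ.wV z ≤ Cc * Γ.wE z y₀ := by
    rw [div_le_iff₀ hCc] at hμ
    linarith
  nlinarith [Γ.wE_nonneg z y₀]

/-- Transfer of the squared norm through a quasi-isometry. -/
lemma norm_transfer {V₁ V₂ : Type*} [DecidableEq V₂]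
    {Γ₁ : WeightedGraph V₁} {Γ₂ : WeightedGraph V₂} {Cc₂ Cq : ℝ}
    (h₂c : Γ₂.Controlled Cc₂) (hCq : 0 ≤ Cq)
    (Φ : V₁ → V₂) (hwt : ∀ x, Γ₂.wV (Φ x) ≤ Cq * Γ₁.wV x)
    (xw : V₂ → V₁) (eA : ℕ) (hxw : ∀ w, Γ₂.G.dist w (Φ (xw w)) ≤ eA)
    {f : V₂ → ℝ} {Ω : Finset V₂} (hsupp : ∀ x, f x ≠ 0 → x ∈ Ω)
    {Ω' : Finset V₁} (hsupp' : ∀ x, f (Φ x) ≠ 0 → x ∈ Ω') :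
    Γ₂.sqnorm f ≤ (2*Cc₂^eA*Cq*(((⌈Cc₂⌉₊+1:ℕ):ℝ)^eA)) * Γ₁.sqnorm (fun x => f (Φ x))
      + (4*(eA:ℝ)*Cc₂^(eA+1)*(((⌈Cc₂⌉₊+1:ℕ):ℝ)^eA)) * Γ₂.energy f := by
  classical
  have hCc₂ : (0:ℝ) < Cc₂ := lt_trans one_pos h₂c.1
  set NB : ℝ := (((⌈Cc₂⌉₊+1:ℕ):ℝ)^eA) with hNBdef
  have hNB0 : (0:ℝ) ≤ NB := by positivity
  set g : V₁ → ℝ := fun x => f (Φ x) with hgdef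
  have hpow : (0:ℝ) ≤ Cc₂^eA := by positivity
  -- split the norm
  have h0 : Γ₂.sqnorm f = ∑ w ∈ Ω, f w^2 * Γ₂.wV w := sqnorm_eq_sum hsupp
  have hsplit : Γ₂.sqnorm f ≤ 2 * (∑ w ∈ Ω, (g (xw w))^2 * Γ₂.wV w)
      + 2 * (∑ w ∈ Ω, (f w - g (xw w))^2 * Γ₂.wV w) := by
    rw [h0, Finset.mul_sum, Finset.mul_sum, ← Finset.sum_add_distrib]
    apply Finset.sum_le_sum
    intro w _
    nlinarith [Γ₂.wV_pos w, sq_nonneg (f w - 2 * g (xw w)), sq_nonneg (f w - g (xw w)),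
      sq_nonneg (g (xw w))]
  -- first sum
  have hSone : ∑ w ∈ Ω, (g (xw w))^2 * Γ₂.wV w
      ≤ Cc₂^eA * Cq * NB * Γ₁.sqnorm g := by
    have step1 : ∑ w ∈ Ω, (g (xw w))^2 * Γ₂.wV w
        ≤ Cc₂^eA * Cq * ∑ w ∈ Ω, (g (xw w))^2 * Γ₁.wV (xw w) := by
      rw [Finset.mul_sum]
      apply Finset.sum_le_sum
      intro w _
      have h1 : Γ₂.wV w ≤ Cc₂^eA * Γ₂.wV (Φ (xw w)) := h₂c.dist_wV_le (hxw w)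
      have h2 : Γ₂.wV (Φ (xw w)) ≤ Cq * Γ₁.wV (xw w) := hwt (xw w)
      have h3 : Γ₂.wV w ≤ Cc₂^eA * (Cq * Γ₁.wV (xw w)) := by nlinarith
      nlinarith [sq_nonneg (g (xw w))]
    have step2 : ∑ w ∈ Ω, (g (xw w))^2 * Γ₁.wV (xw w) ≤ NB * Γ₁.sqnorm g := by
      set X := Ω.image xw with hX
      have hfib := Finset.sum_fiberwise_of_maps_to (g := xw) (t := X)
        (fun w hw => Finset.mem_image_of_mem xw hw)
        (fun w => (g (xw w))^2 * Γ₁.wV (xw w))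
      rw [← hfib]
      have hinner : ∀ x ∈ X, ∑ w ∈ Ω.filter (fun w => xw w = x), (g (xw w))^2 * Γ₁.wV (xw w)
          ≤ NB * ((g x)^2 * Γ₁.wV x) := by
        intro x _
        have hconst : ∀ w ∈ Ω.filter (fun w => xw w = x),
            (g (xw w))^2 * Γ₁.wV (xw w) = (g x)^2 * Γ₁.wV x := by
          intro w hw
          rw [(Finset.mem_filter.mp hw).2]
        rw [Finset.sum_congr rfl hconst, Finset.sum_const, nsmul_eq_mul]
        refine mul_le_mul_of_nonneg_right ?_ (mul_nonneg (sq_nonneg _) (Γ₁.wV_pos x).le)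
        have hsub : Ω.filter (fun w => xw w = x) ⊆ Γ₂.ballF h₂c (Φ x) eA := by
          intro w hw
          obtain ⟨_, hwx⟩ := Finset.mem_filter.mp hw
          apply mem_ballF_of_dist
          rw [SimpleGraph.dist_comm]
          rw [← hwx]
          exact hxw w
        calc ((Ω.filter (fun w => xw w = x)).card : ℝ)
            ≤ ((Γ₂.ballF h₂c (Φ x) eA).card : ℝ) := by
              exact_mod_cast Finset.card_le_card hsub
        _ ≤ NB := by
              rw [hNBdef]
              exact_mod_cast card_ballF_le h₂c (Φ x) eA
      calc ∑ x ∈ X, ∑ w ∈ Ω.filter (fun w => xw w = x), (g (xw w))^2 * Γ₁.wV (xw w)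
          ≤ ∑ x ∈ X, NB * ((g x)^2 * Γ₁.wV x) := Finset.sum_le_sum hinner
      _ = NB * ∑ x ∈ X, (g x)^2 * Γ₁.wV x := by rw [Finset.mul_sum]
      _ ≤ NB * Γ₁.sqnorm g := by
          apply mul_le_mul_of_nonneg_left _ hNB0
          exact Summable.sum_le_tsum X (fun x _ => mul_nonneg (sq_nonneg _) (Γ₁.wV_pos x).le)
            (sqnorm_summable hsupp')
    calc ∑ w ∈ Ω, (g (xw w))^2 * Γ₂.wV w
        ≤ Cc₂^eA * Cq * ∑ w ∈ Ω, (g (xw w))^2 * Γ₁.wV (xw w) := step1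
    _ ≤ Cc₂^eA * Cq * (NB * Γ₁.sqnorm g) := by
        apply mul_le_mul_of_nonneg_left step2 (by positivity)
    _ = Cc₂^eA * Cq * NB * Γ₁.sqnorm g := by ring
  -- second sum
  have hStwo : ∑ w ∈ Ω, (f w - g (xw w))^2 * Γ₂.wV w
      ≤ (eA:ℝ) * Cc₂^(eA+1) * NB * (2 * Γ₂.energy f) := by
    set pb : V₂ → Finset (V₂ × V₂) :=
      fun w => (Γ₂.ballF h₂c w eA) ×ˢ (Γ₂.ballF h₂c w eA) with hpb
    have step1 : ∑ w ∈ Ω, (f w - g (xw w))^2 * Γ₂.wV w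
        ≤ (eA:ℝ) * Cc₂^(eA+1) * ∑ w ∈ Ω, ∑ p ∈ pb w, (f p.1 - f p.2)^2 * Γ₂.wE p.1 p.2 := by
      rw [Finset.mul_sum]
      apply Finset.sum_le_sum
      intro w _
      exact chain_bound h₂c (hxw w) f
    have step2 : ∑ w ∈ Ω, ∑ p ∈ pb w, (f p.1 - f p.2)^2 * Γ₂.wE p.1 p.2
        ≤ NB * ∑ p ∈ Ω.biUnion pb, (f p.1 - f p.2)^2 * Γ₂.wE p.1 p.2 := by
      apply sum_sum_le_mult Ω pb _ (fun p => term_nonneg p.1 p.2) NB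
      intro p _
      have hsub : Ω.filter (fun w => p ∈ pb w) ⊆ Γ₂.ballF h₂c p.1 eA := by
        intro w hw
        obtain ⟨_, hpw⟩ := Finset.mem_filter.mp hw
        rw [hpb] at hpw
        have h1 : p.1 ∈ Γ₂.ballF h₂c w eA := (Finset.mem_product.mp hpw).1
        apply mem_ballF_of_dist
        rw [SimpleGraph.dist_comm]
        exact dist_le_of_mem_ballF h₂c h1
      calc ((Ω.filter (fun w => p ∈ pb w)).card : ℝ)
          ≤ ((Γ₂.ballF h₂c p.1 eA).card : ℝ) := by
            exact_mod_cast Finset.card_le_card hsub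
      _ ≤ NB := by
            rw [hNBdef]
            exact_mod_cast card_ballF_le h₂c p.1 eA
    have step3 : ∑ p ∈ Ω.biUnion pb, (f p.1 - f p.2)^2 * Γ₂.wE p.1 p.2 ≤ 2 * Γ₂.energy f :=
      sum_pairs_le_two_energy hsupp _
    calc ∑ w ∈ Ω, (f w - g (xw w))^2 * Γ₂.wV w
        ≤ (eA:ℝ) * Cc₂^(eA+1) * ∑ w ∈ Ω, ∑ p ∈ pb w, (f p.1 - f p.2)^2 * Γ₂.wE p.1 p.2 := step1
    _ ≤ (eA:ℝ) * Cc₂^(eA+1) * (NB * ∑ p ∈ Ω.biUnion pb, (f p.1 - f p.2)^2 * Γ₂.wE p.1 p.2) := by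
        apply mul_le_mul_of_nonneg_left step2 (by positivity)
    _ ≤ (eA:ℝ) * Cc₂^(eA+1) * (NB * (2 * Γ₂.energy f)) := by
        apply mul_le_mul_of_nonneg_left _ (by positivity)
        exact mul_le_mul_of_nonneg_left step3 hNB0
    _ = (eA:ℝ) * Cc₂^(eA+1) * NB * (2 * Γ₂.energy f) := by ring
  calc Γ₂.sqnorm f ≤ 2 * (∑ w ∈ Ω, (g (xw w))^2 * Γ₂.wV w)
      + 2 * (∑ w ∈ Ω, (f w - g (xw w))^2 * Γ₂.wV w) := hsplit
  _ ≤ 2 * (Cc₂^eA * Cq * NB * Γ₁.sqnorm g)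
      + 2 * ((eA:ℝ) * Cc₂^(eA+1) * NB * (2 * Γ₂.energy f)) := by
      have := mul_le_mul_of_nonneg_left hSone (by norm_num : (0:ℝ) ≤ 2)
      have := mul_le_mul_of_nonneg_left hStwo (by norm_num : (0:ℝ) ≤ 2)
      linarith
  _ = (2*Cc₂^eA*Cq*NB) * Γ₁.sqnorm g + (4*(eA:ℝ)*Cc₂^(eA+1)*NB) * Γ₂.energy f := by ring

end WeightedGraph
namespace WeightedGraph

/-- Transfer of the Dirichlet energy through a quasi-isometry. -/
lemma energy_transfer {V₁ V₂ : Type*} [DecidableEq V₁] [DecidableEq V₂]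
    {Γ₁ : WeightedGraph V₁} {Γ₂ : WeightedGraph V₂} {Cc₁ Cc₂ Cq : ℝ}
    (h₁c : Γ₁.Controlled Cc₁) (h₂c : Γ₂.Controlled Cc₂) (hCq : 0 ≤ Cq)
    (Φ : V₁ → V₂) (hwt : ∀ x, Γ₁.wV x ≤ Cq * Γ₂.wV (Φ x))
    (A : ℕ) (hadj : ∀ x y, Γ₁.G.Adj x y → Γ₂.G.dist (Φ x) (Φ y) ≤ A)
    (Mb : ℕ) (hMb : ∀ (w : V₂) (S : Finset V₁),
      (∀ x ∈ S, Γ₂.G.dist w (Φ x) ≤ A) → S.card ≤ Mb)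
    {f : V₂ → ℝ} {Ω : Finset V₂} (hsupp : ∀ x, f x ≠ 0 → x ∈ Ω)
    {Ω' : Finset V₁} (hsupp' : ∀ x, f (Φ x) ≠ 0 → x ∈ Ω') :
    Γ₁.energy (fun x => f (Φ x))
      ≤ ((⌈Cc₁⌉₊:ℝ) * Cq * (A:ℝ) * Cc₂^(A+1) * (Mb:ℝ)) * Γ₂.energy f := by
  classical
  have hCc₂ : (0:ℝ) < Cc₂ := lt_trans one_pos h₂c.1
  set g : V₁ → ℝ := fun x => f (Φ x) with hgdef
  set T : Finset V₁ := Ω' ∪ Ω'.biUnion (Γ₁.nbrF h₁c) with hTdef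
  have h2E : 2 * Γ₁.energy g = ∑ x ∈ T, ∑ y ∈ T, (g x - g y)^2 * Γ₁.wE x y :=
    two_energy_eq_sum h₁c hsupp'
  set Eloc : V₂ → ℝ :=
    fun w => ∑ p ∈ (Γ₂.ballF h₂c w A) ×ˢ (Γ₂.ballF h₂c w A),
      (f p.1 - f p.2)^2 * Γ₂.wE p.1 p.2 with hEloc
  have hEloc0 : ∀ w, 0 ≤ Eloc w := by
    intro w
    exact Finset.sum_nonneg (fun p _ => term_nonneg p.1 p.2)
  set Bd : V₁ → ℝ := fun x => Cq * ((A:ℝ) * Cc₂^(A+1) * Eloc (Φ x)) with hBd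
  have hBd0 : ∀ x, 0 ≤ Bd x := by
    intro x
    have := hEloc0 (Φ x)
    rw [hBd]
    positivity
  have hterm : ∀ x y : V₁, (g x - g y)^2 * Γ₁.wE x y
      ≤ if Γ₁.G.Adj x y then Bd x else 0 := by
    intro x y
    by_cases hxy : Γ₁.G.Adj x y
    · rw [if_pos hxy]
      have h1 : (g x - g y)^2 * Γ₁.wE x y ≤ (g x - g y)^2 * Γ₁.wV x :=
        mul_le_mul_of_nonneg_left (wE_le_wV_left x y) (sq_nonneg _)
      have h2 : (g x - g y)^2 * Γ₁.wV x ≤ Cq * ((g x - g y)^2 * Γ₂.wV (Φ x)) := by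
        have := hwt x
        nlinarith [sq_nonneg (g x - g y)]
      have h3 : (f (Φ x) - f (Φ y))^2 * Γ₂.wV (Φ x)
          ≤ (A:ℝ) * Cc₂^(A+1) * Eloc (Φ x) := chain_bound h₂c (hadj x y hxy) f
      have h4 : (g x - g y)^2 * Γ₂.wV (Φ x) = (f (Φ x) - f (Φ y))^2 * Γ₂.wV (Φ x) := rfl
      rw [hBd]
      calc (g x - g y)^2 * Γ₁.wE x y ≤ Cq * ((g x - g y)^2 * Γ₂.wV (Φ x)) :=
            h1.trans h2
      _ ≤ Cq * ((A:ℝ) * Cc₂^(A+1) * Eloc (Φ x)) := by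
          rw [h4]
          exact mul_le_mul_of_nonneg_left h3 hCq
    · rw [if_neg hxy, wE_eq_zero_of_not_adj hxy, mul_zero]
  have hrow : ∀ x ∈ T, ∑ y ∈ T, (g x - g y)^2 * Γ₁.wE x y ≤ (⌈Cc₁⌉₊:ℝ) * Bd x := by
    intro x _
    calc ∑ y ∈ T, (g x - g y)^2 * Γ₁.wE x y
        ≤ ∑ y ∈ T, (if Γ₁.G.Adj x y then Bd x else 0) :=
          Finset.sum_le_sum (fun y _ => hterm x y)
    _ = ∑ y ∈ T.filter (fun y => Γ₁.G.Adj x y), Bd x := by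
          rw [Finset.sum_filter]
    _ = ((T.filter (fun y => Γ₁.G.Adj x y)).card : ℝ) * Bd x := by
          rw [Finset.sum_const, nsmul_eq_mul]
    _ ≤ (⌈Cc₁⌉₊:ℝ) * Bd x := by
          apply mul_le_mul_of_nonneg_right _ (hBd0 x)
          have hsub : T.filter (fun y => Γ₁.G.Adj x y) ⊆ Γ₁.nbrF h₁c x := by
            intro y hy
            exact (mem_nbrF h₁c).mpr (Finset.mem_filter.mp hy).2
          calc ((T.filter (fun y => Γ₁.G.Adj x y)).card : ℝ)
              ≤ ((Γ₁.nbrF h₁c x).card : ℝ) := by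
                exact_mod_cast Finset.card_le_card hsub
          _ ≤ (⌈Cc₁⌉₊:ℝ) := by exact_mod_cast card_nbrF_le h₁c x
  set pb : V₁ → Finset (V₂ × V₂) :=
    fun x => (Γ₂.ballF h₂c (Φ x) A) ×ˢ (Γ₂.ballF h₂c (Φ x) A) with hpb
  have hexch : ∑ x ∈ T, Eloc (Φ x)
      ≤ (Mb:ℝ) * ∑ p ∈ T.biUnion pb, (f p.1 - f p.2)^2 * Γ₂.wE p.1 p.2 := by
    apply sum_sum_le_mult T pb _ (fun p => term_nonneg p.1 p.2) (Mb:ℝ)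
    intro p _
    have hsub : ∀ x ∈ T.filter (fun x => p ∈ pb x), Γ₂.G.dist p.1 (Φ x) ≤ A := by
      intro x hx
      have hpx := (Finset.mem_filter.mp hx).2
      rw [hpb] at hpx
      have h1 : p.1 ∈ Γ₂.ballF h₂c (Φ x) A := (Finset.mem_product.mp hpx).1
      rw [SimpleGraph.dist_comm]
      exact dist_le_of_mem_ballF h₂c h1
    exact_mod_cast hMb p.1 _ hsub
  have hpairs : ∑ p ∈ T.biUnion pb, (f p.1 - f p.2)^2 * Γ₂.wE p.1 p.2 ≤ 2 * Γ₂.energy f :=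
    sum_pairs_le_two_energy hsupp _
  have hmain : 2 * Γ₁.energy g ≤ (⌈Cc₁⌉₊:ℝ) * Cq * (A:ℝ) * Cc₂^(A+1) * (Mb:ℝ)
      * (2 * Γ₂.energy f) := by
    have hconst : (0:ℝ) ≤ (⌈Cc₁⌉₊:ℝ) * Cq * (A:ℝ) * Cc₂^(A+1) := by positivity
    calc 2 * Γ₁.energy g = ∑ x ∈ T, ∑ y ∈ T, (g x - g y)^2 * Γ₁.wE x y := h2E
    _ ≤ ∑ x ∈ T, (⌈Cc₁⌉₊:ℝ) * Bd x := Finset.sum_le_sum hrow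
    _ = (⌈Cc₁⌉₊:ℝ) * Cq * (A:ℝ) * Cc₂^(A+1) * ∑ x ∈ T, Eloc (Φ x) := by
        rw [Finset.mul_sum]
        apply Finset.sum_congr rfl
        intro x _
        rw [hBd]
        ring
    _ ≤ (⌈Cc₁⌉₊:ℝ) * Cq * (A:ℝ) * Cc₂^(A+1)
          * ((Mb:ℝ) * ∑ p ∈ T.biUnion pb, (f p.1 - f p.2)^2 * Γ₂.wE p.1 p.2) :=
        mul_le_mul_of_nonneg_left hexch hconst
    _ ≤ (⌈Cc₁⌉₊:ℝ) * Cq * (A:ℝ) * Cc₂^(A+1) * ((Mb:ℝ) * (2 * Γ₂.energy f)) := by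
        apply mul_le_mul_of_nonneg_left _ hconst
        exact mul_le_mul_of_nonneg_left hpairs (Nat.cast_nonneg Mb)
    _ = (⌈Cc₁⌉₊:ℝ) * Cq * (A:ℝ) * Cc₂^(A+1) * (Mb:ℝ) * (2 * Γ₂.energy f) := by ring
  linarith

end WeightedGraph
set_option maxHeartbeats 3200000 in
open WeightedGraph in
/-- **Lemma (relative Faber-Krahn functions of quasi-isometric graphs).**
If `Φ : Γ₁ → Γ₂` is a quasi-isometry between connected, countably infinite weighted
graphs with controlled and uniformly lazy weights, and `Φinv` is a quasi-inverse of `Φ`,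
then there are constants `c₁, c₂, c₃ > 0` such that whenever `Λ` is a relative
Faber-Krahn function of `Γ₁`, the function
`(z, r, ν) ↦ c₁ * Λ (Φinv z) (c₂ r) (c₃ ν)` is a relative Faber-Krahn function of `Γ₂`. -/
theorem faberKrahn_quasi_isometry {V₁ V₂ : Type*}
    [Countable V₁] [Infinite V₁] [Countable V₂] [Infinite V₂]
    (Γ₁ : WeightedGraph V₁) (Γ₂ : WeightedGraph V₂)
    (Cc₁ Ce₁ Cc₂ Ce₂ : ℝ)
    (h₁c : Γ₁.Controlled Cc₁) (h₁e : Γ₁.UniformlyLazy Ce₁)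
    (h₂c : Γ₂.Controlled Cc₂) (h₂e : Γ₂.UniformlyLazy Ce₂)
    (Φ : V₁ → V₂) (ε a b Cq : ℝ) (hΦ : IsQI Γ₁ Γ₂ Φ ε a b Cq)
    (Φinv : V₂ → V₁) (hinv : ∀ z : V₂, (Γ₂.G.dist (Φ (Φinv z)) z : ℝ) ≤ ε) :
    ∃ c₁ c₂ c₃ : ℝ, 0 < c₁ ∧ 0 < c₂ ∧ 0 < c₃ ∧
      ∀ Λ : V₁ → ℝ → ℝ → ℝ, Γ₁.IsRelFK Λ →
        Γ₂.IsRelFK (fun z r ν => c₁ * Λ (Φinv z) (c₂ * r) (c₃ * ν)) := by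
  classical
  -- basic positivity facts
  have ha : 0 < a := hΦ.a_pos
  have hb : 0 ≤ b := hΦ.b_nonneg
  have hε : 0 < ε := hΦ.eps_pos
  have hCq : 0 < Cq := hΦ.Cq_pos
  have hCc₂ : (1:ℝ) < Cc₂ := h₂c.1
  have hCc₂pos : (0:ℝ) < Cc₂ := lt_trans one_pos hCc₂
  have hCc₁pos : (0:ℝ) < Cc₁ := lt_trans one_pos h₁c.1
  have hCe₁ : Ce₁ ∈ Set.Ioo (0:ℝ) 1 := h₁e.1
  have h1Ce : (0:ℝ) < 1 - Ce₁ := by have := hCe₁.2; linarith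
  have hCq1 : (1:ℝ) ≤ Cq := by
    obtain ⟨x⟩ : Nonempty V₁ := inferInstance
    have h1 := hΦ.weight_lower x
    have h2 := hΦ.weight_upper x
    have h3 := Γ₁.wV_pos x
    have h4 : Cq⁻¹ ≤ Cq := le_of_mul_le_mul_right (h1.trans h2) h3
    nlinarith [inv_pos.mpr hCq, mul_inv_cancel₀ (ne_of_gt hCq)]
  have hwtrans : ∀ x : V₁, Γ₁.wV x ≤ Cq * Γ₂.wV (Φ x) := by
    intro x
    have h1 := hΦ.weight_lower x
    have h2 : Γ₁.wV x = Cq * (Cq⁻¹ * Γ₁.wV x) := by field_simp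
    rw [h2]
    nlinarith [Γ₂.wV_pos (Φ x)]
  -- integer constants
  set A : ℕ := ⌈a⌉₊ with hAdef
  have haA : a ≤ (A:ℝ) := Nat.le_ceil a
  have hA1 : 1 ≤ A := Nat.ceil_pos.mpr ha
  set eA : ℕ := ⌈ε⌉₊ with heAdef
  have hεeA : ε ≤ (eA:ℝ) := Nat.le_ceil ε
  have heA1 : 1 ≤ eA := Nat.ceil_pos.mpr hε
  set RA : ℕ := ⌈a * (2*(A:ℝ) + b)⌉₊ with hRAdef
  set MpreN : ℕ := (⌈Cc₁⌉₊ + 1)^RA with hMpreNdef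
  set Mpre : ℝ := (MpreN : ℝ) with hMpredef
  have hMpre1 : (1:ℝ) ≤ Mpre := by
    rw [hMpredef, hMpreNdef]
    exact_mod_cast Nat.one_le_iff_ne_zero.mpr (pow_ne_zero _ (by omega))
  set NB : ℝ := (((⌈Cc₂⌉₊+1:ℕ):ℝ)^eA) with hNBdef
  have hNB1 : (1:ℝ) ≤ NB := by
    rw [hNBdef]
    exact one_le_pow₀ (by exact_mod_cast Nat.succ_le_succ (Nat.zero_le _))
  have hNBpos : (0:ℝ) < NB := lt_of_lt_of_le one_pos hNB1
  -- main constants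
  set K₁ : ℝ := 2*Cc₂^eA*Cq*NB with hK₁def
  set K₂ : ℝ := 4*(eA:ℝ)*Cc₂^(eA+1)*NB with hK₂def
  set K₃ : ℝ := (⌈Cc₁⌉₊:ℝ) * Cq * (A:ℝ) * Cc₂^(A+1) * Mpre with hK₃def
  have hK₁pos : 0 < K₁ := by
    rw [hK₁def]
    positivity
  have hK₂pos : 0 < K₂ := by
    rw [hK₂def]
    have h1 : (0:ℝ) < (eA:ℝ) := by exact_mod_cast heA1
    positivity
  have hK₃pos : 0 < K₃ := by
    rw [hK₃def]
    have h1 : (0:ℝ) < (⌈Cc₁⌉₊:ℝ) := lt_of_lt_of_le hCc₁pos (Nat.le_ceil Cc₁)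
    have h2 : (0:ℝ) < (A:ℝ) := by exact_mod_cast hA1
    have h3 : (0:ℝ) < Mpre := lt_of_lt_of_le one_pos hMpre1
    positivity
  set c₁ : ℝ := min (min (1/((1-Ce₁)*Cc₂)) (1/((1-Ce₁)*(2*K₂)))) (1/(2*K₁*K₃)) with hc₁def
  set c₂ : ℝ := a*(1+2*ε+b) with hc₂def
  set c₃ : ℝ := Cq * Cc₂^eA * (Mpre + 1) with hc₃def
  have hc₁pos : 0 < c₁ := by
    rw [hc₁def]
    refine lt_min (lt_min ?_ ?_) ?_
    · positivity
    · positivity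
    · positivity
  have hc₂pos : 0 < c₂ := by rw [hc₂def]; positivity
  have hc₃pos : 0 < c₃ := by
    rw [hc₃def]
    have h3 : (0:ℝ) < Mpre := lt_of_lt_of_le one_pos hMpre1
    positivity
  have hc₁a : c₁ ≤ 1/((1-Ce₁)*Cc₂) := le_trans (min_le_left _ _) (min_le_left _ _)
  have hc₁b : c₁ ≤ 1/((1-Ce₁)*(2*K₂)) := le_trans (min_le_left _ _) (min_le_right _ _)
  have hc₁c : c₁ ≤ 1/(2*K₁*K₃) := min_le_right _ _
  -- preimage cardinality bound
  have hpre : ∀ (w : V₂) (S : Finset V₁), (∀ x ∈ S, Γ₂.G.dist w (Φ x) ≤ A) →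
      S.card ≤ MpreN := by
    intro w S hS
    rcases S.eq_empty_or_nonempty with rfl | ⟨x₀, hx₀⟩
    · simp
    · have hsub : S ⊆ Γ₁.ballF h₁c x₀ RA := by
        intro x hx
        apply mem_ballF_of_dist
        have tri : (Γ₂.G.dist (Φ x₀) (Φ x) : ℝ) ≤
            (Γ₂.G.dist (Φ x₀) w : ℝ) + (Γ₂.G.dist w (Φ x) : ℝ) := by
          exact_mod_cast Γ₂.connected.dist_triangle
        have h1 : (Γ₂.G.dist (Φ x₀) w : ℝ) ≤ (A:ℝ) := by
          rw [SimpleGraph.dist_comm]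
          exact_mod_cast hS x₀ hx₀
        have h2 : (Γ₂.G.dist w (Φ x) : ℝ) ≤ (A:ℝ) := by exact_mod_cast hS x hx
        have h3 := hΦ.dist_lower x₀ x
        have h4 : (Γ₁.G.dist x₀ x : ℝ) ≤ a * (2*(A:ℝ) + b) := by
          have h5 : a⁻¹ * (Γ₁.G.dist x₀ x : ℝ) ≤ 2*(A:ℝ) + b := by
            have h5a : a⁻¹ * (Γ₁.G.dist x₀ x : ℝ) - b ≤ 2*(A:ℝ) :=
              h3.trans (tri.trans (by linarith))
            linarith
          have h6 : (Γ₁.G.dist x₀ x : ℝ) = a * (a⁻¹ * (Γ₁.G.dist x₀ x : ℝ)) := by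
            field_simp
          rw [h6]
          nlinarith
        have h7 : (Γ₁.G.dist x₀ x : ℝ) ≤ (RA : ℝ) := h4.trans (Nat.le_ceil _)
        exact_mod_cast h7
      calc S.card ≤ (Γ₁.ballF h₁c x₀ RA).card := Finset.card_le_card hsub
      _ ≤ (⌈Cc₁⌉₊ + 1)^RA := card_ballF_le h₁c x₀ RA
  -- fibers of Φ are finite
  have hfib : ∀ y : V₂, {x : V₁ | Φ x = y}.Finite := by
    intro y
    apply Set.finite_of_card_finsets_bounded _ MpreN
    intro F hF
    apply hpre y F
    intro x hx
    have hx' : Φ x = y := hF hx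
    rw [hx']
    simp [SimpleGraph.dist_self]
  -- choice of approximate preimages
  set xw : V₂ → V₁ := fun w => (hΦ.dense w).choose with hxwdef
  have hxwspec : ∀ w, (Γ₂.G.dist (Φ (xw w)) w : ℝ) ≤ ε := fun w => (hΦ.dense w).choose_spec
  have hxwn : ∀ w, Γ₂.G.dist w (Φ (xw w)) ≤ eA := by
    intro w
    have h1 : (Γ₂.G.dist (Φ (xw w)) w : ℝ) ≤ (eA:ℝ) := (hxwspec w).trans hεeA
    rw [SimpleGraph.dist_comm] at h1
    exact_mod_cast h1
  refine ⟨c₁, c₂, c₃, hc₁pos, hc₂pos, hc₃pos, ?_⟩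
  intro Λ hΛ
  obtain ⟨hmono, hFK⟩ := hΛ
  constructor
  · -- monotonicity
    intro z r ν₁ ν₂ hν₁ hle
    have h := hmono (Φinv z) (c₂ * r) (c₃ * ν₁) (c₃ * ν₂) (mul_pos hc₃pos hν₁)
      (mul_le_mul_of_nonneg_left hle hc₃pos.le)
    exact mul_le_mul_of_nonneg_left h hc₁pos.le
  · -- main inequality
    intro z r Ω hne hball
    set ν : ℝ := ∑ x ∈ Ω, Γ₂.wV x with hνdef
    have hν : 0 < ν := Finset.sum_pos (fun x _ => Γ₂.wV_pos x) hne
    obtain ⟨x₀, hx₀⟩ := hne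
    have hr0 : 0 ≤ r := le_trans (Nat.cast_nonneg _) (hball x₀ hx₀)
    -- generic singleton bound for Λ
    have hsingleton : ∀ u : V₁, (Γ₁.G.dist (Φinv z) u : ℝ) ≤ c₂ * r →
        Γ₁.wV u ≤ c₃ * ν → Λ (Φinv z) (c₂ * r) (c₃ * ν) ≤ 1 - Ce₁ := by
      intro u hu hwu
      have m1 : Λ (Φinv z) (c₂*r) (c₃*ν) ≤ Λ (Φinv z) (c₂*r) (Γ₁.wV u) :=
        hmono _ _ _ _ (Γ₁.wV_pos u) hwu
      have m2 : Λ (Φinv z) (c₂*r) (Γ₁.wV u) ≤ Γ₁.lambda1 {u} := by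
        have h := hFK (Φinv z) (c₂*r) {u} ⟨u, Finset.mem_singleton_self u⟩
          (fun x hx => by
            rw [Finset.mem_singleton] at hx
            subst hx
            exact hu)
        simpa using h
      exact (m1.trans m2).trans (lambda1_singleton_le h₁c h₁e u)
    apply le_lambda1_of Ω ⟨x₀, hx₀⟩
    intro f hf hsupp
    have hsqf : 0 < Γ₂.sqnorm f := sqnorm_pos hf hsupp
    have hEf : 0 ≤ Γ₂.energy f := energy_nonneg
    have hq0 : 0 ≤ Γ₂.energy f / Γ₂.sqnorm f := div_nonneg hEf hsqf.le
    rcases lt_or_ge r 1 with hr1 | hr1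
    · -- small radius : Ω = {z}
      have hΩz : ∀ x ∈ Ω, x = z := by
        intro x hx
        have h1 : (Γ₂.G.dist z x : ℝ) ≤ r := hball x hx
        have h2 : Γ₂.G.dist z x = 0 := by
          have h3 : (Γ₂.G.dist z x : ℝ) < 1 := lt_of_le_of_lt h1 hr1
          exact_mod_cast Nat.lt_one_iff.mp (by exact_mod_cast h3)
        exact ((Γ₂.connected.dist_eq_zero_iff).mp h2).symm
      have hzΩ : z ∈ Ω := (hΩz x₀ hx₀) ▸ hx₀
      have hΩeq : Ω = {z} := Finset.eq_singleton_iff_unique_mem.mpr ⟨hzΩ, hΩz⟩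
      have hsuppz : ∀ x, f x ≠ 0 → x ∈ ({z} : Finset V₂) := by
        intro x hx
        rw [← hΩeq]
        exact hsupp x hx
      have hfz : f z ≠ 0 := by
        obtain ⟨w, hw⟩ := Function.ne_iff.mp hf
        have h1 := hsuppz w hw
        rw [Finset.mem_singleton] at h1
        exact h1 ▸ hw
      have hq : 1/Cc₂ ≤ Γ₂.energy f / Γ₂.sqnorm f :=
        rayleigh_singleton_lower h₂c hsuppz hfz
      have hΛb : Λ (Φinv z) (c₂ * r) (c₃ * ν) ≤ 1 - Ce₁ := by
        apply hsingleton (Φinv z)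
        · simp only [SimpleGraph.dist_self, Nat.cast_zero]
          exact mul_nonneg hc₂pos.le hr0
        · have h1 : Γ₁.wV (Φinv z) ≤ Cq * Γ₂.wV (Φ (Φinv z)) := hwtrans _
          have h2 : Γ₂.G.dist (Φ (Φinv z)) z ≤ eA := by
            have h2a := (hinv z).trans hεeA
            exact_mod_cast h2a
          have h3 : Γ₂.wV (Φ (Φinv z)) ≤ Cc₂^eA * Γ₂.wV z := h₂c.dist_wV_le h2
          have h4 : ν = Γ₂.wV z := by rw [hνdef, hΩeq, Finset.sum_singleton]
          rw [hc₃def, h4]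
          have hpe : (0:ℝ) < Cc₂^eA := pow_pos hCc₂pos eA
          have h6 : (1:ℝ) ≤ Mpre + 1 := by linarith
          calc Γ₁.wV (Φinv z) ≤ Cq * Γ₂.wV (Φ (Φinv z)) := h1
          _ ≤ Cq * (Cc₂^eA * Γ₂.wV z) := mul_le_mul_of_nonneg_left h3 hCq.le
          _ = Cq * Cc₂^eA * Γ₂.wV z := by ring
          _ ≤ Cq * Cc₂^eA * (Mpre+1) * Γ₂.wV z := by
              have h7 : Cq * Cc₂^eA ≤ Cq * Cc₂^eA * (Mpre+1) :=
                le_mul_of_one_le_right (mul_pos hCq hpe).le h6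
              exact mul_le_mul_of_nonneg_right h7 (Γ₂.wV_pos z).le
      calc c₁ * Λ (Φinv z) (c₂ * r) (c₃ * ν) ≤ c₁ * (1 - Ce₁) :=
            mul_le_mul_of_nonneg_left hΛb hc₁pos.le
      _ ≤ 1/Cc₂ := by
          have h5 := mul_le_mul_of_nonneg_right hc₁a h1Ce.le
          calc c₁ * (1 - Ce₁) ≤ (1/((1-Ce₁)*Cc₂)) * (1 - Ce₁) := h5
          _ = 1/Cc₂ := by field_simp
      _ ≤ Γ₂.energy f / Γ₂.sqnorm f := hq
    · -- large radius : r ≥ 1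
      set g : V₁ → ℝ := fun x => f (Φ x) with hgdef
      have hP₁fin : {x : V₁ | Φ x ∈ Ω}.Finite := by
        have heq : {x : V₁ | Φ x ∈ Ω} = ⋃ y ∈ Ω, {x : V₁ | Φ x = y} := by
          ext x
          simp
        rw [heq]
        exact Set.Finite.biUnion Ω.finite_toSet (fun y _ => hfib y)
      set Ω' : Finset V₁ := hP₁fin.toFinset with hΩ'def
      have hmemΩ' : ∀ x : V₁, x ∈ Ω' ↔ Φ x ∈ Ω := by
        intro x
        rw [hΩ'def, Set.Finite.mem_toFinset]
        rfl
      have hsupp' : ∀ x : V₁, g x ≠ 0 → x ∈ Ω' := by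
        intro x hx
        exact (hmemΩ' x).mpr (hsupp (Φ x) hx)
      -- the norm transfer inequality
      have hstar : Γ₂.sqnorm f ≤ K₁ * Γ₁.sqnorm g + K₂ * Γ₂.energy f := by
        rw [hK₁def, hK₂def, hNBdef]
        exact norm_transfer h₂c hCq.le Φ (fun x => hΦ.weight_upper x) xw eA hxwn hsupp hsupp'
      -- distance bound for u in the image side
      have hballmem : ∀ u : V₁, (Γ₂.G.dist z (Φ u) : ℝ) ≤ r + ε →
          (Γ₁.G.dist (Φinv z) u : ℝ) ≤ c₂ * r := by
        intro u hu
        have tri : (Γ₂.G.dist (Φ (Φinv z)) (Φ u) : ℝ) ≤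
            (Γ₂.G.dist (Φ (Φinv z)) z : ℝ) + (Γ₂.G.dist z (Φ u) : ℝ) := by
          exact_mod_cast Γ₂.connected.dist_triangle
        have h1 : (Γ₂.G.dist (Φ (Φinv z)) (Φ u) : ℝ) ≤ r + 2*ε := by
          have := hinv z
          linarith
        have h2 := hΦ.dist_lower (Φinv z) u
        have h3 : a⁻¹ * (Γ₁.G.dist (Φinv z) u : ℝ) ≤ r + 2*ε + b := by linarith
        have h4 : (Γ₁.G.dist (Φinv z) u : ℝ) ≤ a * (r + 2*ε + b) := by
          have h5 : (Γ₁.G.dist (Φinv z) u : ℝ) = a * (a⁻¹ * (Γ₁.G.dist (Φinv z) u : ℝ)) := by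
            field_simp
          rw [h5]
          nlinarith
        rw [hc₂def]
        calc (Γ₁.G.dist (Φinv z) u : ℝ) ≤ a * (r + 2*ε + b) := h4
        _ ≤ a * ((1+2*ε+b) * r) := by
            apply mul_le_mul_of_nonneg_left _ ha.le
            nlinarith
        _ = a*(1+2*ε+b) * r := by ring
      rcases le_or_gt (Γ₁.sqnorm g * (2*K₁)) (Γ₂.sqnorm f) with hbig | hsml
      · -- degenerate case: pulled-back norm is small
        have hEbound : Γ₂.sqnorm f ≤ 2 * K₂ * Γ₂.energy f := by
          have h1 : K₁ * Γ₁.sqnorm g ≤ Γ₂.sqnorm f / 2 := by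
            have h2 : (0:ℝ) < 2*K₁ := by linarith
            rw [le_div_iff₀ (by norm_num : (0:ℝ) < 2)]
            calc K₁ * Γ₁.sqnorm g * 2 = Γ₁.sqnorm g * (2*K₁) := by ring
            _ ≤ Γ₂.sqnorm f := hbig
          linarith
        have hq : 1/(2*K₂) ≤ Γ₂.energy f / Γ₂.sqnorm f := by
          rw [div_le_div_iff₀ (by linarith : (0:ℝ) < 2*K₂) hsqf]
          linarith
        have hΛb : Λ (Φinv z) (c₂ * r) (c₃ * ν) ≤ 1 - Ce₁ := by
          apply hsingleton (xw x₀)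
          · apply hballmem
            have tri : (Γ₂.G.dist z (Φ (xw x₀)) : ℝ) ≤
                (Γ₂.G.dist z x₀ : ℝ) + (Γ₂.G.dist x₀ (Φ (xw x₀)) : ℝ) := by
              exact_mod_cast Γ₂.connected.dist_triangle
            have h1 : (Γ₂.G.dist x₀ (Φ (xw x₀)) : ℝ) ≤ ε := by
              rw [SimpleGraph.dist_comm]
              exact hxwspec x₀
            have h2 : (Γ₂.G.dist z x₀ : ℝ) ≤ r := hball x₀ hx₀
            linarith
          · have h1 : Γ₁.wV (xw x₀) ≤ Cq * Γ₂.wV (Φ (xw x₀)) := hwtrans _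
            have h2 : Γ₂.wV (Φ (xw x₀)) ≤ Cc₂^eA * Γ₂.wV x₀ :=
              h₂c.dist_wV_le (by
                rw [SimpleGraph.dist_comm]
                exact hxwn x₀)
            have h3 : Γ₂.wV x₀ ≤ ν :=
              Finset.single_le_sum (fun x _ => (Γ₂.wV_pos x).le) hx₀
            rw [hc₃def]
            have hpe : (0:ℝ) < Cc₂^eA := pow_pos hCc₂pos eA
            have h6 : (1:ℝ) ≤ Mpre + 1 := by linarith
            calc Γ₁.wV (xw x₀) ≤ Cq * Γ₂.wV (Φ (xw x₀)) := h1
            _ ≤ Cq * (Cc₂^eA * Γ₂.wV x₀) := mul_le_mul_of_nonneg_left h2 hCq.le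
            _ ≤ Cq * (Cc₂^eA * ν) := by
                apply mul_le_mul_of_nonneg_left _ hCq.le
                exact mul_le_mul_of_nonneg_left h3 hpe.le
            _ = Cq * Cc₂^eA * ν := by ring
            _ ≤ Cq * Cc₂^eA * (Mpre+1) * ν := by
                have h7 : Cq * Cc₂^eA ≤ Cq * Cc₂^eA * (Mpre+1) :=
                  le_mul_of_one_le_right (mul_pos hCq hpe).le h6
                exact mul_le_mul_of_nonneg_right h7 hν.le
        calc c₁ * Λ (Φinv z) (c₂ * r) (c₃ * ν) ≤ c₁ * (1 - Ce₁) :=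
              mul_le_mul_of_nonneg_left hΛb hc₁pos.le
        _ ≤ 1/(2*K₂) := by
            have h5 := mul_le_mul_of_nonneg_right hc₁b h1Ce.le
            calc c₁ * (1 - Ce₁) ≤ (1/((1-Ce₁)*(2*K₂))) * (1 - Ce₁) := h5
            _ = 1/(2*K₂) := by
                field_simp
        _ ≤ Γ₂.energy f / Γ₂.sqnorm f := hq
      · -- main case: transplant the test function
        have hgpos : 0 < Γ₁.sqnorm g := by
          by_contra h
          push_neg at h
          have h1 : Γ₁.sqnorm g * (2*K₁) ≤ 0 := by nlinarith
          nlinarith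
        have hex : ∃ x, g x ≠ 0 := by
          by_contra h
          push_neg at h
          have h1 : Γ₁.sqnorm g = 0 := by
            have : ∀ x, g x ^2 * Γ₁.wV x = 0 := fun x => by rw [h x]; ring
            unfold WeightedGraph.sqnorm
            simp only [this]
            exact tsum_zero
          rw [h1] at hgpos
          exact lt_irrefl 0 hgpos
        obtain ⟨xg, hxg⟩ := hex
        have hgne : g ≠ 0 := fun h => hxg (by rw [h]; rfl)
        have hΩ'ne : Ω'.Nonempty := ⟨xg, hsupp' xg hxg⟩
        -- energy transfer
        have hEg : Γ₁.energy g ≤ K₃ * Γ₂.energy f := by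
          rw [hK₃def, hMpredef]
          apply energy_transfer h₁c h₂c hCq.le Φ hwtrans A _ MpreN hpre hsupp hsupp'
          intro x y hxy
          have h1 := hΦ.dist_upper x y
          have h2 : Γ₁.G.dist x y = 1 := SimpleGraph.dist_eq_one_iff_adj.mpr hxy
          rw [h2] at h1
          have h3 : (Γ₂.G.dist (Φ x) (Φ y) : ℝ) ≤ (A:ℝ) := by
            calc (Γ₂.G.dist (Φ x) (Φ y) : ℝ) ≤ a * 1 := by exact_mod_cast h1
            _ ≤ (A:ℝ) := by linarith
          exact_mod_cast h3
        have hlam : Γ₁.lambda1 Ω' ≤ Γ₁.energy g / Γ₁.sqnorm g :=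
          lambda1_le_of Ω' g hgne hsupp'
        have hEg0 : 0 ≤ Γ₁.energy g := energy_nonneg
        have hqg : Γ₁.energy g / Γ₁.sqnorm g
            ≤ (2*K₁*K₃) * (Γ₂.energy f / Γ₂.sqnorm f) := by
          rw [div_le_iff₀ hgpos]
          have h1 : Γ₂.sqnorm f ≤ 2*K₁*Γ₁.sqnorm g := by nlinarith
          have h2 : (2*K₁*K₃) * (Γ₂.energy f / Γ₂.sqnorm f) * Γ₁.sqnorm g
              = (2*K₁*Γ₁.sqnorm g) * K₃ * (Γ₂.energy f / Γ₂.sqnorm f) := by ring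
          rw [h2]
          calc Γ₁.energy g ≤ K₃ * Γ₂.energy f := hEg
          _ = Γ₂.sqnorm f * K₃ * (Γ₂.energy f / Γ₂.sqnorm f) := by
              field_simp
          _ ≤ (2*K₁*Γ₁.sqnorm g) * K₃ * (Γ₂.energy f / Γ₂.sqnorm f) := by
              apply mul_le_mul_of_nonneg_right _ hq0
              exact mul_le_mul_of_nonneg_right h1 hK₃pos.le
        -- mass bound for Ω'
        have hmass : ∑ x ∈ Ω', Γ₁.wV x ≤ c₃ * ν := by
          have s1 : ∑ x ∈ Ω', Γ₁.wV x ≤ Cq * ∑ x ∈ Ω', Γ₂.wV (Φ x) := by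
            rw [Finset.mul_sum]
            exact Finset.sum_le_sum (fun x _ => hwtrans x)
          have s2 : ∑ x ∈ Ω', Γ₂.wV (Φ x) ≤ Mpre * ν := by
            have hfw := Finset.sum_fiberwise_of_maps_to (g := Φ) (t := Ω)
              (fun x hx => (hmemΩ' x).mp hx) (fun x => Γ₂.wV (Φ x))
            rw [← hfw, hνdef, Finset.mul_sum]
            apply Finset.sum_le_sum
            intro y hy
            have hconst : ∀ x ∈ Ω'.filter (fun x => Φ x = y),
                Γ₂.wV (Φ x) = Γ₂.wV y := by
              intro x hx
              rw [(Finset.mem_filter.mp hx).2]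
            rw [Finset.sum_congr rfl hconst, Finset.sum_const, nsmul_eq_mul]
            apply mul_le_mul_of_nonneg_right _ (Γ₂.wV_pos y).le
            have hcard := hpre y (Ω'.filter (fun x => Φ x = y)) (by
              intro x hx
              rw [(Finset.mem_filter.mp hx).2]
              simp [SimpleGraph.dist_self])
            rw [hMpredef]
            exact_mod_cast hcard
          have s3 : Cq * (Mpre * ν) ≤ c₃ * ν := by
            rw [hc₃def]
            have h1 : (1:ℝ) ≤ Cc₂^eA := one_le_pow₀ hCc₂.le
            have h2 : Mpre ≤ Cc₂^eA * (Mpre+1) := by nlinarith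
            calc Cq * (Mpre * ν) = (Cq * Mpre) * ν := by ring
            _ ≤ (Cq * (Cc₂^eA * (Mpre+1))) * ν :=
                mul_le_mul_of_nonneg_right (mul_le_mul_of_nonneg_left h2 hCq.le) hν.le
            _ = Cq * Cc₂^eA * (Mpre + 1) * ν := by ring
          calc ∑ x ∈ Ω', Γ₁.wV x ≤ Cq * ∑ x ∈ Ω', Γ₂.wV (Φ x) := s1
          _ ≤ Cq * (Mpre * ν) := mul_le_mul_of_nonneg_left s2 hCq.le
          _ ≤ c₃ * ν := s3
        have hmasspos : 0 < ∑ x ∈ Ω', Γ₁.wV x :=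
          Finset.sum_pos (fun x _ => Γ₁.wV_pos x) hΩ'ne
        have m1 : Λ (Φinv z) (c₂*r) (c₃*ν) ≤ Λ (Φinv z) (c₂*r) (∑ x ∈ Ω', Γ₁.wV x) :=
          hmono _ _ _ _ hmasspos hmass
        have m2 : Λ (Φinv z) (c₂*r) (∑ x ∈ Ω', Γ₁.wV x) ≤ Γ₁.lambda1 Ω' := by
          apply hFK (Φinv z) (c₂*r) Ω' hΩ'ne
          intro x hx
          apply hballmem
          have h1 : Φ x ∈ Ω := (hmemΩ' x).mp hx
          have h2 : (Γ₂.G.dist z (Φ x) : ℝ) ≤ r := hball (Φ x) h1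
          linarith
        have hfinal : Λ (Φinv z) (c₂*r) (c₃*ν)
            ≤ (2*K₁*K₃) * (Γ₂.energy f / Γ₂.sqnorm f) :=
          ((m1.trans m2).trans hlam).trans hqg
        calc c₁ * Λ (Φinv z) (c₂ * r) (c₃ * ν)
            ≤ c₁ * ((2*K₁*K₃) * (Γ₂.energy f / Γ₂.sqnorm f)) :=
              mul_le_mul_of_nonneg_left hfinal hc₁pos.le
        _ ≤ (1/(2*K₁*K₃)) * ((2*K₁*K₃) * (Γ₂.energy f / Γ₂.sqnorm f)) := by
            apply mul_le_mul_of_nonneg_right hc₁c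
            have h1 : (0:ℝ) < 2*K₁*K₃ := mul_pos (mul_pos two_pos hK₁pos) hK₃pos
            exact mul_nonneg h1.le hq0
        _ = Γ₂.energy f / Γ₂.sqnorm f := by
            have h1 : (2*K₁*K₃) ≠ 0 := ne_of_gt (mul_pos (mul_pos two_pos hK₁pos) hK₃pos)
            field_simp
end

section
/- Claim (measure of the pulled-back neighborhood under a quasi-isometry): Let Φ : Γ → Γ̂ be a quasi-isometry with constants ε, a, b, C_q between connected weighted graphs with controlled and uniformly lazy weights. Then there is a constant c₃ > 0, depending only on ε and the quasi-isometry and weight constants, such that for every finite set Ω̂ ⊆ Γ̂, the set Ω = {α ∈ Γ : d̂(Φ(α), Ω̂) ≤ ε} satisfies π(Ω) ≤ c₃ · π̂(Ω̂). -/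
open scoped BigOperators

section AuxLemmas

open WeightedGraph

variable {V : Type*}

lemma WGaux.wE_le_wV (Γ : WeightedGraph V) (x y : V) : Γ.wE x y ≤ Γ.wV y := by
  calc Γ.wE x y = Γ.wE y x := Γ.wE_symm x y
    _ ≤ ∑' z, Γ.wE y z := Summable.le_tsum (Γ.wE_summable y) x (fun z _ => Γ.wE_nonneg y z)
    _ ≤ Γ.wV y := Γ.subordinate y

lemma WGaux.weight_walk (Γ : WeightedGraph V) {Cc : ℝ} (hc : Γ.Controlled Cc)
    {u v : V} (p : Γ.G.Walk u v) : Γ.wV u ≤ Cc ^ p.length * Γ.wV v := by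
  have hCc : (0 : ℝ) < Cc := lt_trans one_pos hc.1
  induction p with
  | nil => simp
  | @cons u w v h q ih =>
    have h1 : Γ.wV u ≤ Cc * Γ.wE u w := hc.2 u w h
    have h2 : Γ.wE u w ≤ Γ.wV w := WGaux.wE_le_wV Γ u w
    calc Γ.wV u ≤ Cc * Γ.wV w := le_trans h1 (by nlinarith)
      _ ≤ Cc * (Cc ^ q.length * Γ.wV v) := by
          have := ih
          nlinarith
      _ = Cc ^ (SimpleGraph.Walk.cons h q).length * Γ.wV v := by
          rw [SimpleGraph.Walk.length_cons]; ring

lemma WGaux.weight_dist (Γ : WeightedGraph V) {Cc : ℝ} (hc : Γ.Controlled Cc)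
    (hconn : Γ.G.Connected) {u v : V} {n : ℕ} (hd : Γ.G.dist u v ≤ n) :
    Γ.wV u ≤ Cc ^ n * Γ.wV v := by
  have hCc1 : (1 : ℝ) ≤ Cc := le_of_lt hc.1
  obtain ⟨p, hp⟩ := hconn.exists_walk_length_eq_dist u v
  have h1 := WGaux.weight_walk Γ hc p
  have h2 : Cc ^ p.length ≤ Cc ^ n := by
    apply pow_le_pow_right₀ hCc1
    omega
  have hv := (Γ.wV_pos v).le
  nlinarith

lemma WGaux.nbr_finite (Γ : WeightedGraph V) {Cc : ℝ} (hc : Γ.Controlled Cc) (x : V) :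
    {y | Γ.G.Adj x y}.Finite := by
  have hw : 0 < Γ.wV x / Cc := div_pos (Γ.wV_pos x) (lt_trans one_pos hc.1)
  have h := (Γ.wE_summable x).tendsto_cofinite_zero
  have h2 : ∀ᶠ y in Filter.cofinite, Γ.wE x y < Γ.wV x / Cc :=
    h.eventually (gt_mem_nhds hw)
  rw [Filter.eventually_cofinite] at h2
  refine h2.subset ?_
  intro y hy
  have h1 : Γ.wV x ≤ Cc * Γ.wE x y := hc.2 x y hy
  have hCc : (0 : ℝ) < Cc := lt_trans one_pos hc.1
  simp only [Set.mem_setOf_eq, not_lt]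
  rw [div_le_iff₀ hCc]
  linarith [mul_comm Cc (Γ.wE x y) ▸ h1]

lemma WGaux.card_nbr (Γ : WeightedGraph V) {Cc : ℝ} (hc : Γ.Controlled Cc) (x : V)
    (s : Finset V) (hs : ∀ y ∈ s, Γ.G.Adj x y) : (s.card : ℝ) ≤ Cc := by
  have hCc : (0 : ℝ) < Cc := lt_trans one_pos hc.1
  have hw : (0 : ℝ) < Γ.wV x := Γ.wV_pos x
  have h1 : (s.card : ℝ) * (Γ.wV x / Cc) ≤ ∑ y ∈ s, Γ.wE x y := by
    have he : (s.card : ℝ) * (Γ.wV x / Cc) = ∑ _y ∈ s, Γ.wV x / Cc := by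
      rw [Finset.sum_const, nsmul_eq_mul]
    rw [he]
    refine Finset.sum_le_sum fun y hy => ?_
    have := hc.2 x y (hs y hy)
    rw [div_le_iff₀ hCc]
    linarith [mul_comm Cc (Γ.wE x y) ▸ this]
  have h2 : ∑ y ∈ s, Γ.wE x y ≤ ∑' y, Γ.wE x y :=
    Summable.sum_le_tsum s (fun y _ => Γ.wE_nonneg x y) (Γ.wE_summable x)
  have h3 := Γ.subordinate x
  have h4 : (s.card : ℝ) * (Γ.wV x / Cc) ≤ Γ.wV x := by linarith
  have h5 := mul_le_mul_of_nonneg_right h4 hCc.le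
  have h6 : (s.card : ℝ) * Γ.wV x ≤ Γ.wV x * Cc := by
    calc (s.card : ℝ) * Γ.wV x = (s.card : ℝ) * (Γ.wV x / Cc) * Cc := by field_simp
      _ ≤ Γ.wV x * Cc := h5
  nlinarith [h6]

lemma WGaux.ball_cover (Γ : WeightedGraph V) {Cc : ℝ} (hc : Γ.Controlled Cc)
    (hconn : Γ.G.Connected) (x : V) (n : ℕ) :
    ∃ s : Finset V, (∀ y, Γ.G.dist x y ≤ n → y ∈ s) ∧ (s.card : ℝ) ≤ (Cc + 1) ^ n := by
  classical
  induction n with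
  | zero =>
    refine ⟨{x}, ?_, by simp⟩
    intro y hy
    have h0 : Γ.G.dist x y = 0 := Nat.le_zero.mp hy
    have := (hconn.dist_eq_zero_iff).mp h0
    simp [this]
  | succ n ih =>
    obtain ⟨s, hs, hcard⟩ := ih
    set F : V → Finset V := fun v => insert v ((WGaux.nbr_finite Γ hc v).toFinset) with hF
    refine ⟨s.biUnion F, ?_, ?_⟩
    · intro y hy
      rcases Nat.lt_or_ge (Γ.G.dist x y) (n + 1) with hlt | hge
      · exact Finset.mem_biUnion.mpr ⟨y, hs y (Nat.lt_succ_iff.mp hlt),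
          Finset.mem_insert_self _ _⟩
      · have hd : Γ.G.dist x y = n + 1 := le_antisymm hy hge
        obtain ⟨p, hp⟩ := hconn.exists_walk_length_eq_dist x y
        cases hrev : p.reverse with
        | nil =>
          exfalso
          have := congrArg SimpleGraph.Walk.length hrev
          rw [SimpleGraph.Walk.length_reverse, hp, hd] at this
          simp at this
        | @cons _ w _ h q =>
          have hlen : q.length = n := by
            have := congrArg SimpleGraph.Walk.length hrev
            rw [SimpleGraph.Walk.length_reverse, hp, hd] at this
            simp at this
            omega
          have hdv : Γ.G.dist x w ≤ n := by
            have := SimpleGraph.dist_le q.reverse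
            rwa [SimpleGraph.Walk.length_reverse, hlen] at this
          refine Finset.mem_biUnion.mpr ⟨w, hs w hdv, Finset.mem_insert.mpr (Or.inr ?_)⟩
          rw [Set.Finite.mem_toFinset]
          exact h.symm
    · have hC0 : (0 : ℝ) ≤ Cc + 1 := by linarith [lt_trans one_pos hc.1]
      calc ((s.biUnion F).card : ℝ) ≤ ∑ v ∈ s, ((F v).card : ℝ) := by
            exact_mod_cast Finset.card_biUnion_le
        _ ≤ ∑ _v ∈ s, (Cc + 1) := by
            refine Finset.sum_le_sum fun v _ => ?_
            have h1 : (F v).card ≤ ((WGaux.nbr_finite Γ hc v).toFinset).card + 1 :=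
              Finset.card_insert_le _ _
            have h2 : (((WGaux.nbr_finite Γ hc v).toFinset).card : ℝ) ≤ Cc := by
              refine WGaux.card_nbr Γ hc v _ fun y hy => ?_
              rwa [Set.Finite.mem_toFinset] at hy
            have h1' : ((F v).card : ℝ) ≤ (((WGaux.nbr_finite Γ hc v).toFinset).card : ℝ) + 1 := by
              exact_mod_cast h1
            linarith
        _ = (s.card : ℝ) * (Cc + 1) := by rw [Finset.sum_const, nsmul_eq_mul]
        _ ≤ (Cc + 1) ^ n * (Cc + 1) := by nlinarith
        _ = (Cc + 1) ^ (n + 1) := by ring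

lemma WGaux.setSum_le_finset (A : Set V) (f : V → ℝ) (hf : ∀ x, 0 ≤ f x)
    (s : Finset V) (hA : A ⊆ ↑s) : setSum A f ≤ ∑ x ∈ s, f x := by
  classical
  rw [setSum, tsum_subtype]
  have h0 : ∀ x ∉ s, A.indicator f x = 0 := fun x hx =>
    Set.indicator_of_notMem (fun hxA => hx (hA hxA)) f
  rw [tsum_eq_sum h0]
  exact Finset.sum_le_sum fun x _ => Set.indicator_le_self' (fun y _ => hf y) x

lemma WGaux.sum_biUnion_le {W : Type*} [DecidableEq V] (s : Finset W) (F : W → Finset V)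
    (f : V → ℝ) (hf : ∀ x, 0 ≤ f x) :
    ∑ x ∈ s.biUnion F, f x ≤ ∑ y ∈ s, ∑ x ∈ F y, f x := by
  classical
  induction s using Finset.induction_on with
  | empty => simp
  | @insert a t ha ih =>
    rw [Finset.biUnion_insert, Finset.sum_insert ha]
    have h1 : ∑ x ∈ F a ∪ t.biUnion F, f x ≤ ∑ x ∈ F a, f x + ∑ x ∈ t.biUnion F, f x := by
      have := Finset.sum_union_inter (s₁ := F a) (s₂ := t.biUnion F) (f := f)
      have hnn : 0 ≤ ∑ x ∈ F a ∩ t.biUnion F, f x :=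
        Finset.sum_nonneg fun x _ => hf x
      linarith
    linarith

end AuxLemmas

open WeightedGraph in
/-- **Claim (measure of the pulled-back neighborhood under a quasi-isometry).**
Let `Φ : Γ₁ → Γ₂` be a quasi-isometry between connected weighted graphs with controlled
and uniformly lazy weights.  Then there is a constant `c₃ > 0` such that for every
finite set `Ω̂ ⊆ Γ₂`, the set `Ω = {α | d₂(Φ α, Ω̂) ≤ ε}` satisfies
`π₁(Ω) ≤ c₃ · π₂(Ω̂)`. -/
theorem measure_of_pulled_back_neighborhood {V₁ V₂ : Type*}
    (Γ₁ : WeightedGraph V₁) (Γ₂ : WeightedGraph V₂)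
    (Cc₁ Ce₁ Cc₂ Ce₂ : ℝ)
    (h₁c : Γ₁.Controlled Cc₁) (h₁e : Γ₁.UniformlyLazy Ce₁)
    (h₂c : Γ₂.Controlled Cc₂) (h₂e : Γ₂.UniformlyLazy Ce₂)
    (Φ : V₁ → V₂) (ε a b Cq : ℝ) (hΦ : IsQI Γ₁ Γ₂ Φ ε a b Cq) :
    ∃ c₃ : ℝ, 0 < c₃ ∧ ∀ Ωhat : Finset V₂,
      setSum {x : V₁ | ∃ y ∈ Ωhat, (Γ₂.G.dist (Φ x) y : ℝ) ≤ ε} Γ₁.wV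
        ≤ c₃ * ∑ y ∈ Ωhat, Γ₂.wV y := by
  classical
  have hconn₁ := Γ₁.connected
  have hconn₂ := Γ₂.connected
  set m := ⌈ε⌉₊ with hm
  set nR := ⌈a * (2 * ε + b)⌉₊ with hnR
  set K := Cq * Cc₂ ^ m with hK
  set N := (Cc₁ + 1) ^ nR with hN
  have hCc₂0 : (0 : ℝ) < Cc₂ := lt_trans one_pos h₂c.1
  have hKpos : 0 < K := mul_pos hΦ.Cq_pos (pow_pos hCc₂0 m)
  have hNpos : (0 : ℝ) < N := pow_pos (by linarith [h₁c.1]) nR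
  refine ⟨N * K, mul_pos hNpos hKpos, ?_⟩
  intro Ωhat
  have hwt : ∀ (y : V₂) (x : V₁), (Γ₂.G.dist (Φ x) y : ℝ) ≤ ε → Γ₁.wV x ≤ K * Γ₂.wV y := by
    intro y x hxy
    have hd : Γ₂.G.dist (Φ x) y ≤ m := by
      have : (Γ₂.G.dist (Φ x) y : ℝ) ≤ (m : ℝ) := hxy.trans (Nat.le_ceil ε)
      exact_mod_cast this
    have h1 : Γ₂.wV (Φ x) ≤ Cc₂ ^ m * Γ₂.wV y := WGaux.weight_dist Γ₂ h₂c hconn₂ hd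
    have h2 : Γ₁.wV x ≤ Cq * Γ₂.wV (Φ x) := by
      have hl := hΦ.weight_lower x
      have hq := hΦ.Cq_pos
      have := mul_le_mul_of_nonneg_left hl hq.le
      rwa [← mul_assoc, mul_inv_cancel₀ hq.ne', one_mul] at this
    calc Γ₁.wV x ≤ Cq * Γ₂.wV (Φ x) := h2
      _ ≤ Cq * (Cc₂ ^ m * Γ₂.wV y) := by nlinarith [hΦ.Cq_pos, h1]
      _ = K * Γ₂.wV y := by rw [hK]; ring
  have hA : ∀ y : V₂, ∃ F : Finset V₁,
      ({x : V₁ | (Γ₂.G.dist (Φ x) y : ℝ) ≤ ε} ⊆ ↑F) ∧ ((F.card : ℝ) ≤ N) ∧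
      (∀ x ∈ F, (Γ₂.G.dist (Φ x) y : ℝ) ≤ ε) := by
    intro y
    by_cases hne : ∃ x₀ : V₁, (Γ₂.G.dist (Φ x₀) y : ℝ) ≤ ε
    · obtain ⟨x₀, hx₀⟩ := hne
      obtain ⟨s, hs, hcard⟩ := WGaux.ball_cover Γ₁ h₁c hconn₁ x₀ nR
      refine ⟨s.filter (fun x => (Γ₂.G.dist (Φ x) y : ℝ) ≤ ε), ?_, ?_, ?_⟩
      · intro x hx
        simp only [Set.mem_setOf_eq] at hx
        refine Finset.mem_coe.mpr (Finset.mem_filter.mpr ⟨?_, hx⟩)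
        apply hs
        have hdd : (Γ₂.G.dist (Φ x₀) (Φ x) : ℝ) ≤ 2 * ε := by
          have ht : Γ₂.G.dist (Φ x₀) (Φ x) ≤ Γ₂.G.dist (Φ x₀) y + Γ₂.G.dist y (Φ x) :=
            hconn₂.dist_triangle
          have hsymm : Γ₂.G.dist y (Φ x) = Γ₂.G.dist (Φ x) y := SimpleGraph.dist_comm
          have ht' : (Γ₂.G.dist (Φ x₀) (Φ x) : ℝ) ≤
              (Γ₂.G.dist (Φ x₀) y : ℝ) + (Γ₂.G.dist (Φ x) y : ℝ) := by
            rw [← hsymm]; exact_mod_cast ht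
          linarith
        have hlow := hΦ.dist_lower x₀ x
        have hapos := hΦ.a_pos
        have h7 : a⁻¹ * (Γ₁.G.dist x₀ x : ℝ) ≤ 2 * ε + b := by linarith
        have hd1 : (Γ₁.G.dist x₀ x : ℝ) ≤ a * (2 * ε + b) := by
          have := mul_le_mul_of_nonneg_left h7 hapos.le
          rwa [← mul_assoc, mul_inv_cancel₀ hapos.ne', one_mul] at this
        have : (Γ₁.G.dist x₀ x : ℝ) ≤ (nR : ℝ) := hd1.trans (Nat.le_ceil _)
        exact_mod_cast this
      · calc ((s.filter (fun x => (Γ₂.G.dist (Φ x) y : ℝ) ≤ ε)).card : ℝ) ≤ (s.card : ℝ) := by exact_mod_cast Finset.card_filter_le s _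
          _ ≤ N := hcard
      · intro x hx; exact (Finset.mem_filter.mp hx).2
    · refine ⟨∅, ?_, by simpa using hNpos.le, by simp⟩
      intro x hx; exact absurd ⟨x, hx⟩ hne
  choose F hF1 hF2 hF3 using hA
  set S := Ωhat.biUnion F with hS
  have hsub : {x : V₁ | ∃ y ∈ Ωhat, (Γ₂.G.dist (Φ x) y : ℝ) ≤ ε} ⊆ ↑S := by
    intro x hx
    obtain ⟨y, hy, hd⟩ := hx
    exact Finset.mem_coe.mpr (Finset.mem_biUnion.mpr ⟨y, hy, Finset.mem_coe.mp (hF1 y hd)⟩)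
  calc setSum {x : V₁ | ∃ y ∈ Ωhat, (Γ₂.G.dist (Φ x) y : ℝ) ≤ ε} Γ₁.wV
      ≤ ∑ x ∈ S, Γ₁.wV x :=
        WGaux.setSum_le_finset _ _ (fun x => (Γ₁.wV_pos x).le) S hsub
    _ ≤ ∑ y ∈ Ωhat, ∑ x ∈ F y, Γ₁.wV x :=
        WGaux.sum_biUnion_le Ωhat F Γ₁.wV (fun x => (Γ₁.wV_pos x).le)
    _ ≤ ∑ y ∈ Ωhat, (N * K) * Γ₂.wV y := by
        refine Finset.sum_le_sum fun y _ => ?_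
        calc ∑ x ∈ F y, Γ₁.wV x ≤ ∑ _x ∈ F y, K * Γ₂.wV y :=
              Finset.sum_le_sum fun x hx => hwt y x (hF3 y x hx)
          _ = ((F y).card : ℝ) * (K * Γ₂.wV y) := by rw [Finset.sum_const, nsmul_eq_mul]
          _ ≤ N * (K * Γ₂.wV y) := by nlinarith [hF2 y, mul_pos hKpos (Γ₂.wV_pos y)]
          _ = (N * K) * Γ₂.wV y := by ring
    _ = (N * K) * ∑ y ∈ Ωhat, Γ₂.wV y := by rw [Finset.mul_sum]
end
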